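/- arXiv:1009.0780 — 2 statements merged into one kernel-verified Lean document; each statement's English description precedes it below -/
import Mathlib

section
/- If f : ℕ → ℝ is a Benford sequence (with f(n) ≠ 0 for all n) and c is a nonzero real number, then the sequence n ↦ c·f(n) is Benford. -/
open Filter Topology

/-- `|x|` begins with the base-`k` digit string of `d`:
there is an integer `m ≥ 0` with `d·k^m ≤ |x| < (d+1)·k^m`. -/
def BeginsWith (k d : ℕ) (x : ℝ) : Prop :=
  ∃ m : ℕ, (d : ℝ) * (k : ℝ) ^ m ≤ |x| ∧ |x| < ((d : ℝ) + 1) * (k : ℝ) ^ m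

open scoped Classical in
/-- The set `S ⊆ ℕ` has natural density `r`. -/
def HasNatDensity (S : Set ℕ) (r : ℝ) : Prop :=
  Tendsto (fun N : ℕ => (((Finset.range N).filter (fun n => n ∈ S)).card : ℝ) / N)
    atTop (𝓝 r)

/-- The sequence `a` is Benford. -/
def IsBenford (a : ℕ → ℝ) : Prop :=
  ∀ k : ℕ, 2 ≤ k → ∀ d : ℕ, 0 < d →
    HasNatDensity {n | BeginsWith k d (a n)} (Real.logb k (d + 1) - Real.logb k d)

open scoped Classical in
/-- The real sequence `x` is uniformly distributed modulo 1. -/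
def UnifDistMod1 (x : ℕ → ℝ) : Prop :=
  ∀ a b : ℝ, 0 ≤ a → a < b → b ≤ 1 →
    Tendsto (fun N : ℕ =>
        (((Finset.Icc 1 N).filter (fun n => Int.fract (x n) ∈ Set.Ico a b)).card : ℝ) / N)
      atTop (𝓝 (b - a))

open Real

open scoped Classical

noncomputable def dcnt (S : Set ℕ) (N : ℕ) : ℝ :=
  (((Finset.range N).filter (fun n => n ∈ S)).card : ℝ)

lemma hasNatDensity_iff' (S : Set ℕ) (r : ℝ) :
    HasNatDensity S r ↔ Tendsto (fun N : ℕ => dcnt S N / N) atTop (𝓝 r) := Iff.rfl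

lemma dcnt_nonneg (S : Set ℕ) (N : ℕ) : 0 ≤ dcnt S N := Nat.cast_nonneg _

lemma dcnt_eq_sum (S : Set ℕ) (N : ℕ) :
    dcnt S N = ∑ n ∈ Finset.range N, (if n ∈ S then (1:ℝ) else 0) := by
  unfold dcnt
  rw [Finset.card_filter]
  push_cast
  exact Finset.sum_congr rfl (fun n _ => by by_cases h : n ∈ S <;> simp [h])

lemma dcnt_congr {S T : Set ℕ} (h : ∀ n, n ∈ S ↔ n ∈ T) (N : ℕ) : dcnt S N = dcnt T N := by
  unfold dcnt
  congr 2
  exact Finset.filter_congr (fun x _ => h x)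

lemma dcnt_subset {S T : Set ℕ} (h : S ⊆ T) (N : ℕ) : dcnt S N ≤ dcnt T N := by
  unfold dcnt
  have : (Finset.range N).filter (fun n => n ∈ S) ⊆ (Finset.range N).filter (fun n => n ∈ T) := by
    intro x hx
    simp only [Finset.mem_filter] at *
    exact ⟨hx.1, h hx.2⟩
  exact_mod_cast Finset.card_le_card this

lemma dcnt_union_le (S T : Set ℕ) (N : ℕ) : dcnt (S ∪ T) N ≤ dcnt S N + dcnt T N := by
  rw [dcnt_eq_sum, dcnt_eq_sum, dcnt_eq_sum, ← Finset.sum_add_distrib]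
  refine Finset.sum_le_sum (fun n _ => ?_)
  by_cases hS : n ∈ S <;> by_cases hT : n ∈ T <;> simp [hS, hT, Set.mem_union]

lemma dcnt_union_disjoint {S T : Set ℕ} (h : ∀ n, ¬(n ∈ S ∧ n ∈ T)) (N : ℕ) :
    dcnt (S ∪ T) N = dcnt S N + dcnt T N := by
  rw [dcnt_eq_sum, dcnt_eq_sum, dcnt_eq_sum, ← Finset.sum_add_distrib]
  refine Finset.sum_congr rfl (fun n _ => ?_)
  by_cases hS : n ∈ S <;> by_cases hT : n ∈ T <;>
    simp [hS, hT, Set.mem_union]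
  exact absurd ⟨hS, hT⟩ (h n)

lemma dcnt_univ (N : ℕ) : dcnt Set.univ N = N := by
  rw [dcnt_eq_sum]
  simp

lemma dcnt_compl (S : Set ℕ) (N : ℕ) : dcnt Sᶜ N = N - dcnt S N := by
  have h := dcnt_union_disjoint (S := S) (T := Sᶜ) (fun n hn => hn.2 hn.1) N
  have h2 : dcnt (S ∪ Sᶜ) N = dcnt Set.univ N := dcnt_congr (by simp) N
  have h3 := dcnt_univ N
  linarith

lemma density_congr {S T : Set ℕ} {r : ℝ} (h : ∀ n, n ∈ S ↔ n ∈ T)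
    (hS : HasNatDensity S r) : HasNatDensity T r := by
  rw [hasNatDensity_iff'] at *
  exact hS.congr (fun N => by rw [dcnt_congr h])

lemma density_union_disjoint {S T : Set ℕ} {r s : ℝ} (h : ∀ n, ¬(n ∈ S ∧ n ∈ T))
    (hS : HasNatDensity S r) (hT : HasNatDensity T s) : HasNatDensity (S ∪ T) (r + s) := by
  rw [hasNatDensity_iff'] at *
  exact (hS.add hT).congr (fun N => by rw [dcnt_union_disjoint h, add_div])

lemma density_zero_subset {S T : Set ℕ} (h : T ⊆ S) (hS : HasNatDensity S 0) :
    HasNatDensity T 0 := by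
  rw [hasNatDensity_iff'] at *
  refine squeeze_zero (fun N => div_nonneg (dcnt_nonneg _ _) (Nat.cast_nonneg _)) (fun N => ?_) hS
  gcongr
  · exact dcnt_subset h N

lemma density_compl {S : Set ℕ} {r : ℝ} (hS : HasNatDensity S r) :
    HasNatDensity Sᶜ (1 - r) := by
  rw [hasNatDensity_iff'] at *
  have h1 : Tendsto (fun N : ℕ => (N : ℝ) / N) atTop (𝓝 1) := by
    refine Tendsto.congr' ?_ tendsto_const_nhds
    filter_upwards [eventually_gt_atTop 0] with N hN
    rw [div_self (by positivity)]
  have := h1.sub hS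
  refine this.congr (fun N => ?_)
  rw [dcnt_compl, sub_div]

lemma density_congr_null {S T Z : Set ℕ} {r : ℝ}
    (h : ∀ n, n ∉ Z → (n ∈ S ↔ n ∈ T))
    (hS : HasNatDensity S r) (hZ : HasNatDensity Z 0) : HasNatDensity T r := by
  rw [hasNatDensity_iff'] at *
  have hTS : ∀ N, dcnt T N ≤ dcnt S N + dcnt Z N := by
    intro N
    calc dcnt T N ≤ dcnt (S ∪ Z) N := by
          refine dcnt_subset (fun n hn => ?_) N
          by_cases hz : n ∈ Z
          · exact Or.inr hz
          · exact Or.inl ((h n hz).mpr hn)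
      _ ≤ dcnt S N + dcnt Z N := dcnt_union_le _ _ _
  have hST : ∀ N, dcnt S N - dcnt Z N ≤ dcnt T N := by
    intro N
    have : dcnt S N ≤ dcnt T N + dcnt Z N := by
      calc dcnt S N ≤ dcnt (T ∪ Z) N := by
            refine dcnt_subset (fun n hn => ?_) N
            by_cases hz : n ∈ Z
            · exact Or.inr hz
            · exact Or.inl ((h n hz).mp hn)
        _ ≤ dcnt T N + dcnt Z N := dcnt_union_le _ _ _
    linarith
  have hlo : Tendsto (fun N : ℕ => (dcnt S N - dcnt Z N) / N) atTop (𝓝 r) := by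
    have := hS.sub hZ
    rw [sub_zero] at this
    exact this.congr (fun N => by rw [sub_div])
  have hhi : Tendsto (fun N : ℕ => (dcnt S N + dcnt Z N) / N) atTop (𝓝 r) := by
    have := hS.add hZ
    rw [add_zero] at this
    exact this.congr (fun N => by rw [add_div])
  refine tendsto_of_tendsto_of_tendsto_of_le_of_le hlo hhi (fun N => ?_) (fun N => ?_)
  · gcongr
    exact hST N
  · gcongr
    exact hTS N

lemma density_squeeze {S : Set ℕ} {r : ℝ}
    (h : ∀ ε : ℝ, 0 < ε → ∃ (Sm Sp : Set ℕ) (rm rp : ℝ),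
      Sm ⊆ S ∧ S ⊆ Sp ∧ HasNatDensity Sm rm ∧ HasNatDensity Sp rp ∧
        r - ε ≤ rm ∧ rp ≤ r + ε) : HasNatDensity S r := by
  rw [hasNatDensity_iff']
  rw [Metric.tendsto_atTop]
  intro ε hε
  obtain ⟨Sm, Sp, rm, rp, hSm, hSp, hdm, hdp, hrm, hrp⟩ := h (ε/3) (by linarith)
  rw [hasNatDensity_iff', Metric.tendsto_atTop] at hdm hdp
  obtain ⟨N1, h1⟩ := hdm (ε/3) (by linarith)
  obtain ⟨N2, h2⟩ := hdp (ε/3) (by linarith)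
  refine ⟨max N1 N2, fun N hN => ?_⟩
  have e1 := h1 N (le_trans (le_max_left _ _) hN)
  have e2 := h2 N (le_trans (le_max_right _ _) hN)
  rw [Real.dist_eq, abs_lt] at e1 e2 ⊢
  have hb1 : dcnt Sm N / N ≤ dcnt S N / N := by
    gcongr
    · exact dcnt_subset hSm N
  have hb2 : dcnt S N / N ≤ dcnt Sp N / N := by
    gcongr
    · exact dcnt_subset hSp N
  constructor <;> [nlinarith; nlinarith]


lemma keyIff (k d j : ℕ) (hk : 2 ≤ k) (hd1 : ((k:ℝ))^j ≤ d)
    (hd2 : ((d:ℝ) + 1) ≤ (k:ℝ)^(j+1)) (x : ℝ) (hx : x ≠ 0) :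
    BeginsWith k d x ↔ ((d:ℝ) ≤ |x| ∧
      Int.fract (Real.logb k |x|) ∈
        Set.Ico (Real.logb k d - j) (Real.logb k (d+1) - j)) := by
  have hK : (1:ℝ) < k := by exact_mod_cast (by omega : 1 < k)
  have hK0 : (0:ℝ) < k := by linarith
  have hd0 : (0:ℝ) < d := lt_of_lt_of_le (pow_pos hK0 j) hd1
  have habs : 0 < |x| := abs_pos.mpr hx
  have hlogkk : Real.logb k ((k:ℝ)) = 1 := Real.logb_self_eq_one hK
  have hlogpow : ∀ m : ℕ, Real.logb k ((k:ℝ)^m) = m := by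
    intro m; rw [Real.logb_pow, hlogkk]; ring
  have hjd : (j : ℝ) ≤ Real.logb k d := by
    have := Real.logb_le_logb_of_le hK (pow_pos hK0 j) hd1
    rwa [hlogpow j] at this
  have hd1j : Real.logb k ((d:ℝ)+1) ≤ (j:ℝ)+1 := by
    have := Real.logb_le_logb_of_le hK (by linarith) hd2
    rw [hlogpow (j+1)] at this
    push_cast at this; linarith
  constructor
  · rintro ⟨m, h1, h2⟩
    have hdx : (d:ℝ) ≤ |x| := le_trans (le_mul_of_one_le_right hd0.le (one_le_pow₀ hK.le)) h1
    have hL1 : Real.logb k d + m ≤ Real.logb k |x| := by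
      have := Real.logb_le_logb_of_le hK (by positivity) h1
      rwa [Real.logb_mul (ne_of_gt hd0) (by positivity), hlogpow m] at this
    have hL2 : Real.logb k |x| < Real.logb k ((d:ℝ)+1) + m := by
      have := Real.logb_lt_logb hK habs h2
      rwa [Real.logb_mul (by positivity) (by positivity), hlogpow m] at this
    have hfl : ⌊Real.logb k |x|⌋ = (j : ℤ) + m := by
      rw [Int.floor_eq_iff]
      constructor
      · push_cast; linarith
      · push_cast; linarith
    refine ⟨hdx, ?_, ?_⟩
    · rw [Int.fract, hfl]; push_cast; linarith
    · rw [Int.fract, hfl]; push_cast; linarith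
  · rintro ⟨hdx, hm1, hm2⟩
    have hLd : Real.logb k d ≤ Real.logb k |x| := Real.logb_le_logb_of_le hK hd0 hdx
    have hjl : (j : ℝ) ≤ Real.logb k |x| := le_trans hjd hLd
    have hjp : (j : ℤ) ≤ ⌊Real.logb k |x|⌋ := by
      rw [Int.le_floor]; exact_mod_cast hjl
    set p : ℤ := ⌊Real.logb k |x|⌋ with hp
    have hcast : ((p - (j:ℤ)).toNat : ℝ) = (p : ℝ) - j := by
      have h2 := congrArg (fun z : ℤ => (z:ℝ)) (Int.toNat_of_nonneg (by omega : (0:ℤ) ≤ p - j))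
      push_cast at h2
      linarith
    refine ⟨(p - j).toNat, ?_, ?_⟩
    · rw [← Real.rpow_natCast (k:ℝ) ((p - (j:ℤ)).toNat), hcast]
      have : Real.logb k ((d:ℝ) * (k:ℝ) ^ ((p:ℝ) - j)) ≤ Real.logb k |x| := by
        rw [Real.logb_mul (ne_of_gt hd0) (by positivity), Real.logb_rpow hK0 (by linarith)]
        rw [Int.fract] at hm1
        push_cast
        push_cast at hm1
        linarith
      have hpos : (0:ℝ) < (d:ℝ) * (k:ℝ) ^ ((p:ℝ) - j) := by positivity
      exact (Real.logb_le_logb hK hpos habs).mp this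
    · rw [← Real.rpow_natCast (k:ℝ) ((p - (j:ℤ)).toNat), hcast]
      have : Real.logb k |x| < Real.logb k (((d:ℝ)+1) * (k:ℝ) ^ ((p:ℝ) - j)) := by
        rw [Real.logb_mul (by positivity) (by positivity), Real.logb_rpow hK0 (by linarith)]
        rw [Int.fract] at hm2
        have := hm2
        push_cast
        push_cast at this
        linarith
      have hpos : (0:ℝ) < ((d:ℝ)+1) * (k:ℝ) ^ ((p:ℝ) - j) := by positivity
      exact (Real.logb_lt_logb_iff hK habs hpos).mp this


lemma density_empty : HasNatDensity ∅ 0 := by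
  rw [hasNatDensity_iff']
  have : ∀ N : ℕ, dcnt ∅ N = 0 := by
    intro N; rw [dcnt_eq_sum]; simp
  refine Tendsto.congr (fun N => by rw [this N]) ?_
  simpa using tendsto_const_nhds

lemma BeginsWith_disjoint {k j d1 d2 : ℕ} (hk : 2 ≤ k)
    (h11 : (k:ℝ)^j ≤ d1) (h12 : ((d1:ℝ)+1) ≤ (k:ℝ)^(j+1))
    (h21 : (k:ℝ)^j ≤ d2) (h22 : ((d2:ℝ)+1) ≤ (k:ℝ)^(j+1))
    (hne : d1 ≠ d2) (x : ℝ) : ¬(BeginsWith k d1 x ∧ BeginsWith k d2 x) := by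
  have hK : (1:ℝ) < k := by exact_mod_cast (by omega : 1 < k)
  rintro ⟨⟨m1, a1, b1⟩, ⟨m2, a2, b2⟩⟩
  have hmono : ∀ {s t : ℕ}, (k:ℝ)^s < (k:ℝ)^t → s < t := by
    intro s t h
    exact (pow_lt_pow_iff_right₀ hK).mp h
  have key : ∀ {m m' : ℕ}, (k:ℝ)^j * (k:ℝ)^m ≤ |x| → |x| < (k:ℝ)^(j+1) * (k:ℝ)^m' → m ≤ m' := by
    intro m m' hlo hhi
    have : (k:ℝ)^(j+m) < (k:ℝ)^(j+1+m') := by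
      rw [pow_add, pow_add]; exact lt_of_le_of_lt hlo hhi
    have := hmono this
    omega
  have e1 : (k:ℝ)^j * (k:ℝ)^m1 ≤ |x| :=
    le_trans (by exact mul_le_mul_of_nonneg_right h11 (by positivity)) a1
  have e2 : (k:ℝ)^j * (k:ℝ)^m2 ≤ |x| :=
    le_trans (by exact mul_le_mul_of_nonneg_right h21 (by positivity)) a2
  have f1 : |x| < (k:ℝ)^(j+1) * (k:ℝ)^m1 :=
    lt_of_lt_of_le b1 (by exact mul_le_mul_of_nonneg_right h12 (by positivity))
  have f2 : |x| < (k:ℝ)^(j+1) * (k:ℝ)^m2 :=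
    lt_of_lt_of_le b2 (by exact mul_le_mul_of_nonneg_right h22 (by positivity))
  have hm : m1 = m2 := le_antisymm (key e1 f2) (key e2 f1)
  subst hm
  have hp : (0:ℝ) < (k:ℝ)^m1 := by positivity
  have c1 : (d1:ℝ) < (d2:ℝ) + 1 := by
    have := lt_of_le_of_lt a1 b2
    exact lt_of_mul_lt_mul_right this hp.le
  have c2 : (d2:ℝ) < (d1:ℝ) + 1 := by
    have := lt_of_le_of_lt a2 b1
    exact lt_of_mul_lt_mul_right this hp.le
  have c1' : d1 < d2 + 1 := by exact_mod_cast c1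
  have c2' : d2 < d1 + 1 := by exact_mod_cast c2
  omega

lemma exists_pow_window {k : ℕ} (hk : 2 ≤ k) (j : ℕ) (x : ℝ) (hx : (k:ℝ)^j ≤ x) :
    ∃ m : ℕ, (k:ℝ)^(j+m) ≤ x ∧ x < (k:ℝ)^(j+m+1) := by
  have hK : (1:ℝ) < k := by exact_mod_cast (by omega : 1 < k)
  obtain ⟨T, hT⟩ := pow_unbounded_of_one_lt x hK
  have hjT : j ≤ T := by
    by_contra h
    push_neg at h
    have : (k:ℝ)^T ≤ (k:ℝ)^j := pow_le_pow_right₀ hK.le (by omega)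
    linarith
  set P : ℕ → Prop := fun t => (k:ℝ)^t ≤ x with hP
  have hPj : P j := hx
  set t := Nat.findGreatest P T with ht
  have htP : P t := Nat.findGreatest_spec hjT hPj
  have hjt : j ≤ t := Nat.le_findGreatest hjT hPj
  have htT : t ≤ T := Nat.findGreatest_le T
  have hnt : ¬ P (t+1) := by
    rcases Nat.lt_or_ge t T with h | h
    · exact Nat.findGreatest_is_greatest (k := t+1) (n := T) (by omega) (by omega)
    · have : t = T := by omega
      intro hc
      rw [this] at hc
      have : (k:ℝ)^(T+1) ≤ (k:ℝ)^T := le_trans hc hT.le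
      have := (pow_lt_pow_iff_right₀ hK).mpr (show T < T+1 by omega)
      linarith
  refine ⟨t - j, ?_, ?_⟩
  · rwa [show j + (t - j) = t by omega]
  · rw [show j + (t - j) + 1 = t + 1 by omega]
    have hnt' : ¬ ((k:ℝ)^(t+1) ≤ x) := hnt
    push_neg at hnt'
    exact hnt' 


section Benford

variable {f : ℕ → ℝ} (hf : ∀ n, f n ≠ 0) {k : ℕ} (hk : 2 ≤ k) (hB : IsBenford f)

include hf hk hB

lemma density_digit_range (j : ℕ) :
    ∀ b : ℕ, k^j ≤ b → b ≤ k^(j+1) →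
      HasNatDensity {n | ∃ d' : ℕ, k^j ≤ d' ∧ d' < b ∧ BeginsWith k d' (f n)}
        (Real.logb k b - j) := by
  have hK : (1:ℝ) < k := by exact_mod_cast (by omega : 1 < k)
  have hK0 : (0:ℝ) < k := by linarith
  have hlogpow : ∀ m : ℕ, Real.logb k ((k:ℝ)^m) = m := by
    intro m; rw [Real.logb_pow, Real.logb_self_eq_one hK]; ring
  intro b
  induction b with
  | zero =>
    intro h1 h2
    exfalso
    have : 0 < k^j := pow_pos (by omega) j
    omega
  | succ b ih =>
    intro h1 h2
    rcases Nat.lt_or_ge b (k^j) with hb | hb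
    · -- b + 1 = k^j : base case, set is empty
      have hbe : b + 1 = k^j := by omega
      have : ∀ n, ¬ (∃ d' : ℕ, k^j ≤ d' ∧ d' < b + 1 ∧ BeginsWith k d' (f n)) := by
        rintro n ⟨d', hd1, hd2, _⟩; omega
      have heq : Real.logb k ((b+1:ℕ):ℝ) - j = 0 := by
        rw [hbe]; push_cast; rw [hlogpow j]; ring
      rw [show (((b+1:ℕ)):ℝ) = ((b:ℝ)+1) from by push_cast; ring] at heq ⊢
      rw [heq]
      exact density_congr (S := (∅ : Set ℕ)) (fun n => by simpa using (this n)) density_empty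
    · -- step
      have hstep := hB k hk b (by have : 0 < k^j := pow_pos (by omega) j; omega)
      have hIH := ih hb (by omega)
      have hdis : ∀ n, ¬(n ∈ {n | ∃ d' : ℕ, k^j ≤ d' ∧ d' < b ∧ BeginsWith k d' (f n)}
          ∧ n ∈ {n | BeginsWith k b (f n)}) := by
        rintro n ⟨⟨d', hd1, hd2, hBW⟩, hBW'⟩
        have castb : ((k:ℝ))^j ≤ (d' : ℝ) := by
          calc ((k:ℝ))^j = ((k^j : ℕ) : ℝ) := by push_cast; ring
            _ ≤ d' := by exact_mod_cast hd1
        have castb2 : ((d':ℝ)+1) ≤ (k:ℝ)^(j+1) := by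
          have : d' + 1 ≤ k^(j+1) := by omega
          calc ((d':ℝ)+1) = ((d'+1 : ℕ) : ℝ) := by push_cast; ring
            _ ≤ ((k^(j+1) : ℕ) : ℝ) := by exact_mod_cast this
            _ = (k:ℝ)^(j+1) := by push_cast; ring
        have castc : ((k:ℝ))^j ≤ (b : ℝ) := by
          calc ((k:ℝ))^j = ((k^j : ℕ) : ℝ) := by push_cast; ring
            _ ≤ b := by exact_mod_cast hb
        have castc2 : ((b:ℝ)+1) ≤ (k:ℝ)^(j+1) := by
          calc ((b:ℝ)+1) = ((b+1 : ℕ) : ℝ) := by push_cast; ring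
            _ ≤ ((k^(j+1) : ℕ) : ℝ) := by exact_mod_cast h2
            _ = (k:ℝ)^(j+1) := by push_cast; ring
        exact BeginsWith_disjoint hk castb castb2 castc castc2 (by omega) (f n) ⟨hBW, hBW'⟩
      have hU := density_union_disjoint hdis hIH hstep
      have hset : ∀ n, (n ∈ ({n | ∃ d' : ℕ, k^j ≤ d' ∧ d' < b ∧ BeginsWith k d' (f n)}
          ∪ {n | BeginsWith k b (f n)})) ↔
          n ∈ {n | ∃ d' : ℕ, k^j ≤ d' ∧ d' < b + 1 ∧ BeginsWith k d' (f n)} := by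
        intro n
        constructor
        · rintro (⟨d', ha, hb', hc⟩ | h3)
          · exact ⟨d', ha, by omega, hc⟩
          · exact ⟨b, hb, by omega, h3⟩
        · rintro ⟨d', ha, hb', hc⟩
          rcases Nat.lt_or_ge d' b with h | h
          · exact Or.inl ⟨d', ha, h, hc⟩
          · have : d' = b := by omega
            subst this
            exact Or.inr hc
      have hres := density_congr hset hU
      convert hres using 1
      push_cast
      ring
lemma density_tail (j : ℕ) : HasNatDensity {n | (k:ℝ)^j ≤ |f n|} 1 := by
  have hK : (1:ℝ) < k := by exact_mod_cast (by omega : 1 < k)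
  have hK0 : (0:ℝ) < k := by linarith
  have hlogpow : ∀ m : ℕ, Real.logb k ((k:ℝ)^m) = m := by
    intro m; rw [Real.logb_pow, Real.logb_self_eq_one hK]; ring
  have hmain := density_digit_range hf hk hB j (k^(j+1)) (Nat.pow_le_pow_right (by omega) (by omega)) le_rfl
  have hval : Real.logb k ((k^(j+1) : ℕ) : ℝ) - j = 1 := by
    rw [show (((k^(j+1) : ℕ)) : ℝ) = (k:ℝ)^(j+1) from by push_cast; ring, hlogpow]
    push_cast; ring
  rw [hval] at hmain
  refine density_congr (fun n => ?_) hmain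
  simp only [Set.mem_setOf_eq]
  constructor
  · rintro ⟨d', hd1, hd2, m, hm1, hm2⟩
    have : ((k^j : ℕ) : ℝ) ≤ d' := by exact_mod_cast hd1
    calc (k:ℝ)^j = (k:ℝ)^j * 1 := by ring
      _ ≤ (d' : ℝ) * (k:ℝ)^m := by
          apply mul_le_mul (by push_cast at this ⊢; linarith) (one_le_pow₀ hK.le) zero_le_one
          positivity
      _ ≤ |f n| := hm1
  · intro hx
    obtain ⟨m, hm1, hm2⟩ := exists_pow_window hk j (|f n|) hx
    have hpm : (0:ℝ) < (k:ℝ)^m := by positivity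
    set y := |f n| / (k:ℝ)^m with hy
    have hy1 : (k:ℝ)^j ≤ y := by
      rw [hy, le_div_iff₀ hpm, ← pow_add]
      exact hm1
    have hy2 : y < (k:ℝ)^(j+1) := by
      rw [hy, div_lt_iff₀ hpm, ← pow_add]
      rw [show j + 1 + m = j + m + 1 by omega]
      exact hm2
    have hy0 : 0 ≤ y := le_trans (by positivity) hy1
    refine ⟨⌊y⌋₊, ?_, ?_, m, ?_, ?_⟩
    · rw [Nat.le_floor_iff hy0]
      push_cast
      exact hy1
    · rw [show ((k:ℕ)^(j+1) : ℕ) = ((k^(j+1) : ℕ)) from rfl]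
      rw [Nat.floor_lt hy0]
      push_cast
      exact hy2
    · rw [← le_div_iff₀ hpm]
      exact Nat.floor_le hy0
    · rw [← div_lt_iff₀ hpm]
      exact Nat.lt_floor_add_one y
  
lemma density_small (M : ℝ) : HasNatDensity {n | |f n| < M} 0 := by
  have hK : (1:ℝ) < k := by exact_mod_cast (by omega : 1 < k)
  obtain ⟨j, hj⟩ := pow_unbounded_of_one_lt M hK
  have h1 := density_compl (density_tail hf hk hB j)
  rw [sub_self] at h1
  refine density_zero_subset (fun n hn => ?_) h1
  simp only [Set.mem_compl_iff, Set.mem_setOf_eq, not_le]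
  exact lt_trans hn hj

lemma density_fract_digit (j d' : ℕ) (h1 : k^j ≤ d') (h2 : d' + 1 ≤ k^(j+1)) :
    HasNatDensity {n | Int.fract (Real.logb k |f n|) ∈
        Set.Ico (Real.logb k d' - j) (Real.logb k ((d':ℝ)+1) - j)}
      (Real.logb k ((d':ℝ)+1) - Real.logb k d') := by
  have hc1 : (k:ℝ)^j ≤ (d':ℝ) := by
    calc ((k:ℝ))^j = ((k^j : ℕ) : ℝ) := by push_cast; ring
      _ ≤ d' := by exact_mod_cast h1
  have hc2 : ((d':ℝ)+1) ≤ (k:ℝ)^(j+1) := by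
    calc ((d':ℝ)+1) = ((d'+1 : ℕ) : ℝ) := by push_cast; ring
      _ ≤ ((k^(j+1) : ℕ) : ℝ) := by exact_mod_cast h2
      _ = (k:ℝ)^(j+1) := by push_cast; ring
  have hd'0 : 0 < d' := by
    have : 0 < k^j := pow_pos (by omega) j
    omega
  have hBd := hB k hk d' hd'0
  have hZ := density_small hf hk hB (d' : ℝ)
  refine density_congr_null (Z := {n | |f n| < (d' : ℝ)}) (fun n hn => ?_) hBd hZ
  simp only [Set.mem_setOf_eq, not_lt] at hn
  have := keyIff k d' j hk hc1 hc2 (f n) (hf n)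
  simp only [Set.mem_setOf_eq]
  rw [this]
  constructor
  · rintro ⟨-, h⟩; exact h
  · intro h; exact ⟨hn, h⟩

lemma density_fract_range (j a : ℕ) (ha : k^j ≤ a) :
    ∀ b : ℕ, a ≤ b → b ≤ k^(j+1) →
    HasNatDensity {n | Int.fract (Real.logb k |f n|) ∈
        Set.Ico (Real.logb k a - j) (Real.logb k b - j)}
      (Real.logb k b - Real.logb k a) := by
  have hK : (1:ℝ) < k := by exact_mod_cast (by omega : 1 < k)
  refine Nat.le_induction ?_ ?_
  · intro _
    rw [sub_self]
    refine density_congr (S := (∅ : Set ℕ)) (fun n => ?_) density_empty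
    simp
  · intro b hab ih hb1
    have hb : b ≤ k^(j+1) := by omega
    have hIH := ih hb
    have hbpos : (0:ℝ) < b := by
      have : 0 < k^j := pow_pos (by omega) j
      have : 0 < b := by omega
      exact_mod_cast this
    have hstep := density_fract_digit hf hk hB j b (by omega) hb1
    have hab' : Real.logb k (a:ℝ) ≤ Real.logb k (b:ℝ) := by
      rcases Nat.eq_or_lt_of_le hab with h | h
      · rw [h]
      · apply Real.logb_le_logb_of_le hK
        · have : 0 < k^j := pow_pos (by omega) j
          have : 0 < a := by omega
          exact_mod_cast this
        · exact_mod_cast hab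
    have hbb' : Real.logb k (b:ℝ) ≤ Real.logb k ((b:ℝ)+1) :=
      Real.logb_le_logb_of_le hK hbpos (by linarith)
    have hdis : ∀ n, ¬(n ∈ {n | Int.fract (Real.logb k |f n|) ∈
          Set.Ico (Real.logb k a - j) (Real.logb k b - j)} ∧
        n ∈ {n | Int.fract (Real.logb k |f n|) ∈
          Set.Ico (Real.logb k b - j) (Real.logb k ((b:ℝ)+1) - j)}) := by
      rintro n ⟨hA, hBm⟩
      simp only [Set.mem_setOf_eq, Set.mem_Ico] at hA hBm
      linarith [hA.2, hBm.1]
    have hU := density_union_disjoint hdis hIH hstep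
    have hset : ∀ n, n ∈ ({n | Int.fract (Real.logb k |f n|) ∈
          Set.Ico (Real.logb k a - j) (Real.logb k b - j)} ∪
        {n | Int.fract (Real.logb k |f n|) ∈
          Set.Ico (Real.logb k b - j) (Real.logb k ((b:ℝ)+1) - j)}) ↔
        n ∈ {n | Int.fract (Real.logb k |f n|) ∈
          Set.Ico (Real.logb k a - j) (Real.logb k ((b+1 : ℕ):ℝ) - j)} := by
      intro n
      simp only [Set.mem_union, Set.mem_setOf_eq, Set.mem_Ico]
      push_cast
      constructor
      · rintro (⟨u1, u2⟩ | ⟨u1, u2⟩)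
        · exact ⟨u1, by linarith⟩
        · exact ⟨by linarith, u2⟩
      · rintro ⟨u1, u2⟩
        rcases lt_or_ge (Int.fract (Real.logb k |f n|)) (Real.logb k (b:ℝ) - j) with h | h
        · exact Or.inl ⟨u1, h⟩
        · exact Or.inr ⟨h, u2⟩
    have hres := density_congr hset hU
    convert hres using 1
    push_cast
    ring

lemma UD_interval (a b : ℝ) (ha : 0 ≤ a) (hab : a ≤ b) (hb : b ≤ 1) :
    HasNatDensity {n | Int.fract (Real.logb k |f n|) ∈ Set.Ico a b} (b - a) := by
  have hK : (1:ℝ) < k := by exact_mod_cast (by omega : 1 < k)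
  have hK0 : (0:ℝ) < k := by linarith
  have hlogpow : ∀ m : ℕ, Real.logb k ((k:ℝ)^m) = m := by
    intro m; rw [Real.logb_pow, Real.logb_self_eq_one hK]; ring
  refine density_squeeze (fun ε hε => ?_)
  set δ := ε/2 with hδdef
  have hδ : 0 < δ := by positivity
  have hKδ : 1 < (k:ℝ) ^ δ :=
    (Real.one_lt_rpow_iff_of_pos hK0).mpr (Or.inl ⟨hK, hδ⟩)
  obtain ⟨j, hj⟩ := pow_unbounded_of_one_lt (1/((k:ℝ)^δ - 1)) hK
  have hjj : 1 < ((k:ℝ)^δ - 1) * (k:ℝ)^j := by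
    rw [div_lt_iff₀ (by linarith)] at hj
    linarith [hj]
  have gap : ∀ d' : ℕ, (k:ℝ)^j ≤ (d':ℝ) →
      Real.logb k ((d':ℝ)+1) - Real.logb k d' < δ := by
    intro d' hd'
    have hd0 : (0:ℝ) < d' := lt_of_lt_of_le (pow_pos hK0 j) hd'
    have h1 : (d':ℝ) + 1 < d' * (k:ℝ)^δ := by nlinarith
    have h2 : Real.logb k ((d':ℝ)+1) < Real.logb k ((d':ℝ) * (k:ℝ)^δ) :=
      Real.logb_lt_logb hK (by linarith) h1
    rw [Real.logb_mul (ne_of_gt hd0) (by positivity),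
      Real.logb_rpow hK0 (by linarith : (k:ℝ) ≠ 1)] at h2
    linarith
  set D := k^(j+1) - k^j with hD
  have hpow : k^j ≤ k^(j+1) := Nat.pow_le_pow_right (by omega) (by omega)
  have hDj : k^j + D = k^(j+1) := by omega
  set t : ℕ → ℝ := fun i => Real.logb k (((k^j + i : ℕ)) : ℝ) - j with htdef
  have hcast : ∀ i : ℕ, (((k^j + i : ℕ)) : ℝ) = (k:ℝ)^j + i := by
    intro i; push_cast; ring
  have hposc : ∀ i : ℕ, (0:ℝ) < ((k^j + i : ℕ) : ℝ) := by
    intro i; rw [hcast]; positivity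
  have ht0 : t 0 = 0 := by
    rw [htdef]; simp only [hcast]; push_cast; rw [add_zero, hlogpow]; ring
  have htD : t D = 1 := by
    rw [htdef]
    simp only
    rw [hDj]
    rw [show ((((k:ℕ)^(j+1) : ℕ)) : ℝ) = (k:ℝ)^(j+1) from by push_cast; ring, hlogpow]
    push_cast; ring
  have htstrict : ∀ i i' : ℕ, i < i' → t i < t i' := by
    intro i i' h
    rw [htdef]
    simp only
    have : (((k^j + i : ℕ)) : ℝ) < (((k^j + i' : ℕ)) : ℝ) := by
      rw [hcast, hcast]
      have : (i:ℝ) < i' := by exact_mod_cast h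
      linarith
    have := Real.logb_lt_logb hK (hposc i) this
    linarith
  have hgap : ∀ i : ℕ, i < D → t (i+1) - t i < δ := by
    intro i _
    have h1 : (k:ℝ)^j ≤ ((k^j + i : ℕ) : ℝ) := by
      rw [hcast]
      have : (0:ℝ) ≤ i := Nat.cast_nonneg i
      linarith
    have h2 := gap (k^j + i) h1
    rw [htdef]
    simp only
    have hc : ((k^j + (i+1) : ℕ) : ℝ) = ((k^j + i : ℕ):ℝ) + 1 := by push_cast; ring
    rw [hc]
    linarith
  have hIco : ∀ p q : ℕ, p ≤ q → q ≤ D →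
      HasNatDensity {n | Int.fract (Real.logb k |f n|) ∈ Set.Ico (t p) (t q)} (t q - t p) := by
    intro p q hpq hqD
    have h' := density_fract_range hf hk hB j (k^j + p) (by omega) (k^j + q) (by omega) (by omega)
    convert h' using 1
    simp only [htdef]
    ring
  have htmono : ∀ i i' : ℕ, i ≤ i' → t i ≤ t i' := by
    intro i i' h
    rcases Nat.eq_or_lt_of_le h with h' | h'
    · rw [h']
    · exact (htstrict i i' h').le
  -- inner left endpoint
  have hex1 : ∃ i, a ≤ t i := ⟨D, by rw [htD]; linarith⟩
  set p := Nat.find hex1 with hpdef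
  have hp1 : a ≤ t p := Nat.find_spec hex1
  have hpD : p ≤ D := Nat.find_min' hex1 (by rw [htD]; linarith)
  have hp2 : t p ≤ a + δ := by
    rcases Nat.eq_zero_or_pos p with h0 | h0
    · rw [h0, ht0]; linarith
    · have hlt := Nat.find_min hex1 (show p - 1 < p by omega)
      push_neg at hlt
      have hg := hgap (p-1) (by omega)
      rw [show p - 1 + 1 = p by omega] at hg
      linarith
  -- outer right endpoint
  have hex2 : ∃ i, b ≤ t i := ⟨D, by rw [htD]; exact hb⟩
  set q' := Nat.find hex2 with hq'def
  have hq'1 : b ≤ t q' := Nat.find_spec hex2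
  have hq'D : q' ≤ D := Nat.find_min' hex2 (by rw [htD]; exact hb)
  have hq'2 : t q' ≤ b + δ := by
    rcases Nat.eq_zero_or_pos q' with h0 | h0
    · rw [h0, ht0]; linarith
    · have hlt := Nat.find_min hex2 (show q' - 1 < q' by omega)
      push_neg at hlt
      have hg := hgap (q'-1) (by omega)
      rw [show q' - 1 + 1 = q' by omega] at hg
      linarith
  -- outer left endpoint
  have hbnn : 0 ≤ b := le_trans ha hab
  set p' := Nat.findGreatest (fun i => t i ≤ a) D with hp'def
  have hp'1 : t p' ≤ a := by
    have := Nat.findGreatest_spec (P := fun i => t i ≤ a) (Nat.zero_le D)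
      (show t 0 ≤ a by rw [ht0]; exact ha)
    exact this
  have hp'D : p' ≤ D := Nat.findGreatest_le D
  have hp'2 : a ≤ t p' + δ := by
    rcases Nat.lt_or_ge p' D with h0 | h0
    · have hng := Nat.findGreatest_is_greatest (k := p'+1) (n := D)
        (show Nat.findGreatest (fun i => t i ≤ a) D < p'+1 by omega) (by omega)
      have hng2 : ¬ (t (p'+1) ≤ a) := hng
      push_neg at hng2
      rename' hng2 => hng
      have hg := hgap p' h0
      linarith
    · have : p' = D := by omega
      rw [this, htD]
      linarith
  -- inner right endpoint
  set q := Nat.findGreatest (fun i => t i ≤ b) D with hqdef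
  have hq1 : t q ≤ b := by
    have := Nat.findGreatest_spec (P := fun i => t i ≤ b) (Nat.zero_le D)
      (show t 0 ≤ b by rw [ht0]; exact hbnn)
    exact this
  have hqD : q ≤ D := Nat.findGreatest_le D
  have hq2 : b ≤ t q + δ := by
    rcases Nat.lt_or_ge q D with h0 | h0
    · have hng := Nat.findGreatest_is_greatest (k := q+1) (n := D)
        (show Nat.findGreatest (fun i => t i ≤ b) D < q+1 by omega) (by omega)
      have hng2 : ¬ (t (q+1) ≤ b) := hng
      push_neg at hng2
      rename' hng2 => hng
      have hg := hgap q h0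
      linarith
    · have : q = D := by omega
      rw [this, htD]
      linarith
  have hp'q' : p' ≤ q' := by
    by_contra h
    push_neg at h
    have := htstrict q' p' h
    linarith
  have houter := hIco p' q' hp'q' hq'D
  by_cases hpq : p ≤ q
  · refine ⟨{n | Int.fract (Real.logb k |f n|) ∈ Set.Ico (t p) (t q)},
      {n | Int.fract (Real.logb k |f n|) ∈ Set.Ico (t p') (t q')},
      t q - t p, t q' - t p', ?_, ?_, hIco p q hpq hqD, houter, ?_, ?_⟩
    · intro n hn
      simp only [Set.mem_setOf_eq, Set.mem_Ico] at hn ⊢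
      exact ⟨le_trans hp1 hn.1, lt_of_lt_of_le hn.2 hq1⟩
    · intro n hn
      simp only [Set.mem_setOf_eq, Set.mem_Ico] at hn ⊢
      exact ⟨le_trans hp'1 hn.1, lt_of_lt_of_le hn.2 hq'1⟩
    · have hee : ε = δ + δ := by rw [hδdef]; ring
      linarith [hp2, hq2, hee]
    · have hee : ε = δ + δ := by rw [hδdef]; ring
      linarith [hp'2, hq'2, hee]
  · push_neg at hpq
    have hqD' : q < D := by
      rcases Nat.lt_or_ge q D with h | h
      · exact h
      · exfalso
        have : q = D := by omega
        omega
    have hb' : b < t (q+1) := by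
      have hng := Nat.findGreatest_is_greatest (k := q+1) (n := D)
        (show Nat.findGreatest (fun i => t i ≤ b) D < q+1 by omega) (by omega)
      have hng2 : ¬ (t (q+1) ≤ b) := hng
      push_neg at hng2
      rename' hng2 => hng
      exact hng
    have hpq1 : p ≤ q + 1 := Nat.find_min' hex1 (le_of_lt (lt_of_le_of_lt hab hb'))
    have hpeq : p = q + 1 := by omega
    have hta : t q < a := by
      have := Nat.find_min hex1 (show q < p by omega)
      push_neg at this
      exact this
    have hba : b - a < δ := by
      have hg := hgap q hqD'
      linarith
    refine ⟨∅, {n | Int.fract (Real.logb k |f n|) ∈ Set.Ico (t p') (t q')},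
      0, t q' - t p', Set.empty_subset _, ?_, density_empty, houter, ?_, ?_⟩
    · intro n hn
      simp only [Set.mem_setOf_eq, Set.mem_Ico] at hn ⊢
      exact ⟨le_trans hp'1 hn.1, lt_of_lt_of_le hn.2 hq'1⟩
    · have hee : ε = δ + δ := by rw [hδdef]; ring
      linarith [hba, hee, hδ]
    · have hee : ε = δ + δ := by rw [hδdef]; ring
      linarith [hp'2, hq'2, hee]

end Benford


/-- If `f` is Benford and `c ≠ 0`, then `n ↦ c·f(n)` is Benford. -/
theorem isBenford_const_mul (f : ℕ → ℝ) (hf : ∀ n, f n ≠ 0)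
    (c : ℝ) (hc : c ≠ 0) (hB : IsBenford f) :
    IsBenford (fun n => c * f n) := by
  intro k hk d hd
  have hK : (1:ℝ) < k := by exact_mod_cast (by omega : 1 < k)
  have hK0 : (0:ℝ) < k := by linarith
  have hlogpow : ∀ m : ℕ, Real.logb k ((k:ℝ)^m) = m := by
    intro m; rw [Real.logb_pow, Real.logb_self_eq_one hK]; ring
  set j := Nat.log k d with hjdef
  have hj1 : k^j ≤ d := Nat.pow_log_le_self k (by omega)
  have hj2 : d < k^(j+1) := Nat.lt_pow_succ_log_self (by omega) d
  have hc1 : (k:ℝ)^j ≤ (d:ℝ) := by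
    calc ((k:ℝ))^j = ((k^j : ℕ) : ℝ) := by push_cast; ring
      _ ≤ d := by exact_mod_cast hj1
  have hc2 : ((d:ℝ)+1) ≤ (k:ℝ)^(j+1) := by
    calc ((d:ℝ)+1) = ((d+1 : ℕ) : ℝ) := by push_cast; ring
      _ ≤ ((k^(j+1) : ℕ) : ℝ) := by exact_mod_cast hj2
      _ = (k:ℝ)^(j+1) := by push_cast; ring
  have hd0 : (0:ℝ) < d := by exact_mod_cast hd
  set a0 := Real.logb k d - j with ha0def
  set b0 := Real.logb k ((d:ℝ)+1) - j with hb0def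
  have ha0 : 0 ≤ a0 := by
    rw [ha0def]
    have := Real.logb_le_logb_of_le hK (pow_pos hK0 j) hc1
    rw [hlogpow j] at this
    linarith
  have hb0 : b0 ≤ 1 := by
    rw [hb0def]
    have := Real.logb_le_logb_of_le hK (by linarith) hc2
    rw [hlogpow (j+1)] at this
    push_cast at this
    linarith
  have hab0 : a0 < b0 := by
    rw [ha0def, hb0def]
    have := Real.logb_lt_logb hK hd0 (show (d:ℝ) < (d:ℝ)+1 by linarith)
    linarith
  set γ := Real.logb k |c| with hγdef
  set β := Int.fract γ with hβdef
  have hβ0 : 0 ≤ β := Int.fract_nonneg γ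
  have hβ1 : β < 1 := Int.fract_lt_one γ
  have hkey : ∀ n, Int.fract (Real.logb k |c * f n|)
      = Int.fract (Int.fract (Real.logb k |f n|) + β) := by
    intro n
    rw [abs_mul, Real.logb_mul (abs_ne_zero.mpr hc) (abs_ne_zero.mpr (hf n))]
    have e : γ + Real.logb k |f n|
        = (Int.fract (Real.logb k |f n|) + β) + ((⌊γ⌋ + ⌊Real.logb k |f n|⌋ : ℤ) : ℝ) := by
      rw [hβdef, Int.fract, Int.fract]
      push_cast
      ring
    rw [← hγdef, e, Int.fract_add_intCast]
  have fract_shift : ∀ u : ℝ, 0 ≤ u → u < 1 →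
      (Int.fract (u + β) ∈ Set.Ico a0 b0 ↔
        ((u + β < 1 ∧ a0 ≤ u + β ∧ u + β < b0) ∨
         (1 ≤ u + β ∧ a0 ≤ u + β - 1 ∧ u + β - 1 < b0))) := by
    intro u hu0 hu1
    rcases lt_or_ge (u + β) 1 with hub | hub
    · have e : Int.fract (u + β) = u + β := Int.fract_eq_self.mpr ⟨by linarith, hub⟩
      rw [e]
      simp only [Set.mem_Ico]
      constructor
      · rintro ⟨h1, h2⟩; exact Or.inl ⟨hub, h1, h2⟩
      · rintro (⟨_, h1, h2⟩ | ⟨h1, _, _⟩)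
        · exact ⟨h1, h2⟩
        · linarith
    · have e : Int.fract (u + β) = u + β - 1 := by
        have h' : Int.fract (u + β - ((1:ℤ):ℝ)) = Int.fract (u + β) := Int.fract_sub_intCast _ _
        rw [show ((1:ℤ):ℝ) = 1 by norm_num] at h'
        rw [← h']
        exact Int.fract_eq_self.mpr ⟨by linarith, by linarith⟩
      rw [e]
      simp only [Set.mem_Ico]
      constructor
      · rintro ⟨h1, h2⟩; exact Or.inr ⟨hub, h1, h2⟩
      · rintro (⟨h1, _, _⟩ | ⟨_, h1, h2⟩)
        · linarith
        · exact ⟨h1, h2⟩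
  have hG : HasNatDensity {n | Int.fract (Real.logb k |c * f n|) ∈ Set.Ico a0 b0}
      (b0 - a0) := by
    rcases le_or_gt β a0 with hcase | hcase
    · have hud := UD_interval hf hk hB (a0 - β) (b0 - β) (by linarith) (by linarith) (by linarith)
      have hval : (b0 - β) - (a0 - β) = b0 - a0 := by ring
      rw [hval] at hud
      refine density_congr (fun n => ?_) hud
      simp only [Set.mem_setOf_eq]
      rw [hkey n]
      set u := Int.fract (Real.logb k |f n|) with hu
      have hu0 : 0 ≤ u := Int.fract_nonneg _
      have hu1 : u < 1 := Int.fract_lt_one _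
      rw [fract_shift u hu0 hu1]
      simp only [Set.mem_Ico]
      constructor
      · rintro ⟨h1, h2⟩
        exact Or.inl ⟨by linarith, by linarith, by linarith⟩
      · rintro (⟨_, h1, h2⟩ | ⟨h1, h2, _⟩)
        · exact ⟨by linarith, by linarith⟩
        · exfalso; linarith
    · rcases le_or_gt b0 β with hcase2 | hcase2
      · have hud := UD_interval hf hk hB (a0 + 1 - β) (b0 + 1 - β)
          (by linarith) (by linarith) (by linarith)
        have hval : (b0 + 1 - β) - (a0 + 1 - β) = b0 - a0 := by ring
        rw [hval] at hud
        refine density_congr (fun n => ?_) hud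
        simp only [Set.mem_setOf_eq]
        rw [hkey n]
        set u := Int.fract (Real.logb k |f n|) with hu
        have hu0 : 0 ≤ u := Int.fract_nonneg _
        have hu1 : u < 1 := Int.fract_lt_one _
        rw [fract_shift u hu0 hu1]
        simp only [Set.mem_Ico]
        constructor
        · rintro ⟨h1, h2⟩
          exact Or.inr ⟨by linarith, by linarith, by linarith⟩
        · rintro (⟨_, h1, h2⟩ | ⟨h1, h2, h3⟩)
          · exfalso; linarith
          · exact ⟨by linarith, by linarith⟩
      · have hud1 := UD_interval hf hk hB 0 (b0 - β) (le_refl 0) (by linarith) (by linarith)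
        have hud2 := UD_interval hf hk hB (a0 + 1 - β) 1 (by linarith) (by linarith) (le_refl 1)
        have hdis : ∀ n, ¬(n ∈ {n | Int.fract (Real.logb k |f n|) ∈ Set.Ico 0 (b0 - β)} ∧
            n ∈ {n | Int.fract (Real.logb k |f n|) ∈ Set.Ico (a0 + 1 - β) 1}) := by
          rintro n ⟨h1, h2⟩
          simp only [Set.mem_setOf_eq, Set.mem_Ico] at h1 h2
          have : b0 - β ≤ a0 + 1 - β := by linarith
          linarith [h1.2, h2.1]
        have hU := density_union_disjoint hdis hud1 hud2
        have hval : (b0 - β - 0) + (1 - (a0 + 1 - β)) = b0 - a0 := by ring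
        rw [hval] at hU
        refine density_congr (fun n => ?_) hU
        simp only [Set.mem_union, Set.mem_setOf_eq]
        rw [hkey n]
        set u := Int.fract (Real.logb k |f n|) with hu
        have hu0 : 0 ≤ u := Int.fract_nonneg _
        have hu1 : u < 1 := Int.fract_lt_one _
        rw [fract_shift u hu0 hu1]
        simp only [Set.mem_Ico]
        constructor
        · rintro (⟨h1, h2⟩ | ⟨h1, h2⟩)
          · exact Or.inl ⟨by linarith, by linarith, by linarith⟩
          · exact Or.inr ⟨by linarith, by linarith, by linarith⟩
        · rintro (⟨h1, h2, h3⟩ | ⟨h1, h2, h3⟩)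
          · exact Or.inl ⟨by linarith, by linarith⟩
          · exact Or.inr ⟨by linarith, by linarith⟩
  have hZ : HasNatDensity {n | |f n| < (d:ℝ)/|c|} 0 := density_small hf hk hB _
  have hfinal : HasNatDensity {n | BeginsWith k d (c * f n)} (b0 - a0) := by
    refine density_congr_null (Z := {n | |f n| < (d:ℝ)/|c|}) (fun n hn => ?_) hG hZ
    simp only [Set.mem_setOf_eq, not_lt] at hn
    have hcpos : 0 < |c| := abs_pos.mpr hc
    have hdle : (d:ℝ) ≤ |c * f n| := by
      rw [abs_mul]
      rw [div_le_iff₀ hcpos] at hn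
      calc (d:ℝ) ≤ |f n| * |c| := hn
        _ = |c| * |f n| := by ring
    have := keyIff k d j hk hc1 hc2 (c * f n) (mul_ne_zero hc (hf n))
    simp only [Set.mem_setOf_eq]
    rw [this]
    constructor
    · intro h
      exact ⟨hdle, h⟩
    · rintro ⟨-, h⟩
      exact h
  have : HasNatDensity {n | BeginsWith k d ((fun n => c * f n) n)} (b0 - a0) := hfinal
  convert this using 1
  rw [ha0def, hb0def]
  ring
end

section
/- Let a : ℕ → ℤ be a sequence of nonzero integers, and suppose there exist real constants K > 0, α > 0, and β such that |a(n)| ~ K·n^β·e^{α√n} (i.e., lim_{n→∞} |a(n)|/(K n^β e^{α√n}) = 1). Then a is Benford. -/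
open Filter Topology

namespace BenfordAux

open scoped Classical in
/-- count of `n < N` satisfying `p`. -/
noncomputable def cnt (p : ℕ → Prop) (N : ℕ) : ℕ := ((Finset.range N).filter p).card

lemma cnt_mono (p : ℕ → Prop) : Monotone (cnt p) := by
  classical
  exact fun _ _ h =>
    Finset.card_le_card (Finset.filter_subset_filter _ (Finset.range_subset_range.2 h))

lemma cnt_le (p : ℕ → Prop) (N : ℕ) : cnt p N ≤ N := by
  classical
  simpa [cnt] using (Finset.card_filter_le (Finset.range N) p)

lemma cnt_le_cnt_add (p q : ℕ → Prop) (n₂ : ℕ) (h : ∀ n, n₂ ≤ n → p n → q n) (N : ℕ) :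
    cnt p N ≤ cnt q N + n₂ := by
  classical
  have hsub : (Finset.range N).filter p ⊆ ((Finset.range N).filter q) ∪ Finset.range n₂ := by
    intro n hn
    simp only [Finset.mem_filter, Finset.mem_range, Finset.mem_union] at *
    rcases lt_or_ge n n₂ with h' | h'
    · exact Or.inr h'
    · exact Or.inl ⟨hn.1, h n h' hn.2⟩
  calc cnt p N ≤ (((Finset.range N).filter q) ∪ Finset.range n₂).card :=
        Finset.card_le_card hsub
    _ ≤ _ := by
        refine (Finset.card_union_le _ _).trans ?_
        simp [cnt]

lemma cnt_div_nonneg (p : ℕ → Prop) (N : ℕ) : 0 ≤ (cnt p N : ℝ) / N := by positivity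

lemma cnt_div_le_one (p : ℕ → Prop) (N : ℕ) : (cnt p N : ℝ) / N ≤ 1 := by
  rcases Nat.eq_zero_or_pos N with h | h
  · simp [h]
  · rw [div_le_one (by exact_mod_cast h)]
    exact_mod_cast cnt_le p N

/-- Squeeze along a subsequence with ratio tending to 1. -/
lemma tendsto_cnt_div_of_subseq (p : ℕ → Prop) (x : ℕ → ℕ) (r : ℝ)
    (hmono : Monotone x) (htop : Tendsto x atTop atTop)
    (hratio : Tendsto (fun j => (x (j + 1) : ℝ) / (x j)) atTop (𝓝 1))
    (hlim : Tendsto (fun j => (cnt p (x j) : ℝ) / (x j)) atTop (𝓝 r)) :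
    Tendsto (fun N => (cnt p N : ℝ) / N) atTop (𝓝 r) := by
  have hex : ∀ N : ℕ, ∃ j, N < x j := fun N => (htop.eventually_gt_atTop N).exists
  set J : ℕ → ℕ := fun N => Nat.find (hex N) - 1 with hJ
  have hfind_pos : ∀ N, x 0 ≤ N → 1 ≤ Nat.find (hex N) := by
    intro N hN
    rcases Nat.eq_zero_or_pos (Nat.find (hex N)) with h | h
    · exact absurd (Nat.find_spec (hex N)) (by rw [h]; exact not_lt.2 hN)
    · exact h
  have hJ1 : ∀ N, x 0 ≤ N → x (J N) ≤ N := by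
    intro N hN
    have h1 := hfind_pos N hN
    have : J N < Nat.find (hex N) := by simp only [hJ]; omega
    exact not_lt.1 (Nat.find_min (hex N) this)
  have hJ2 : ∀ N, x 0 ≤ N → N < x (J N + 1) := by
    intro N hN
    have h1 := hfind_pos N hN
    have : J N + 1 = Nat.find (hex N) := by simp only [hJ]; omega
    rw [this]; exact Nat.find_spec (hex N)
  have hJtop : Tendsto J atTop atTop := by
    rw [tendsto_atTop_atTop]
    intro b
    refine ⟨max (x 0) (x b), fun N hN => ?_⟩
    have hN0 : x 0 ≤ N := le_trans (le_max_left _ _) hN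
    have hNb : x b ≤ N := le_trans (le_max_right _ _) hN
    by_contra hcon
    push_neg at hcon
    have : x (J N + 1) ≤ x b := hmono (by omega)
    exact absurd (hJ2 N hN0) (not_lt.2 (this.trans hNb))
  have hx1 : ∀ᶠ j in atTop, 1 ≤ x j := htop.eventually_ge_atTop 1
  obtain ⟨j₁, hj₁⟩ := eventually_atTop.1 hx1
  have hxJpos : ∀ᶠ N in atTop, 1 ≤ x (J N) := hJtop.eventually (eventually_atTop.2 ⟨j₁, hj₁⟩)
  have hshift : Tendsto (fun j => (cnt p (x (j + 1)) : ℝ) / (x (j + 1))) atTop (𝓝 r) :=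
    hlim.comp (tendsto_add_atTop_nat 1)
  have hF1 : Tendsto (fun j => (cnt p (x (j + 1)) : ℝ) / (x j)) atTop (𝓝 r) := by
    have h := hshift.mul hratio
    rw [mul_one] at h
    refine h.congr' ?_
    filter_upwards [eventually_atTop.2 ⟨j₁, hj₁⟩] with j hj
    have hxj : (0:ℝ) < x j := by exact_mod_cast hj
    have hxj1 : (0:ℝ) < x (j + 1) := by
      have := le_trans hj (hmono (Nat.le_succ j))
      exact_mod_cast this
    field_simp
  have hinvratio : Tendsto (fun j => (x j : ℝ) / (x (j + 1))) atTop (𝓝 1) := by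
    have h := hratio.inv₀ one_ne_zero
    rw [inv_one] at h
    refine h.congr' ?_
    filter_upwards [] with j
    rw [inv_div]
  have hF2 : Tendsto (fun j => (cnt p (x j) : ℝ) / (x (j + 1))) atTop (𝓝 r) := by
    have h := hlim.mul hinvratio
    rw [mul_one] at h
    refine h.congr' ?_
    filter_upwards [eventually_atTop.2 ⟨j₁, hj₁⟩] with j hj
    have hxj : (0:ℝ) < x j := by exact_mod_cast hj
    field_simp
  refine tendsto_of_tendsto_of_tendsto_of_le_of_le' (hF2.comp hJtop) (hF1.comp hJtop) ?_ ?_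
  · filter_upwards [eventually_ge_atTop (x 0), hxJpos, eventually_ge_atTop 1] with N hN hJpos hN1
    have hNpos : (0:ℝ) < N := by exact_mod_cast hN1
    have hc1 : (cnt p (x (J N)) : ℝ) ≤ cnt p N := by exact_mod_cast cnt_mono p (hJ1 N hN)
    have hc2 : (N : ℝ) ≤ x (J N + 1) := by exact_mod_cast (hJ2 N hN).le
    exact div_le_div₀ (by positivity) hc1 hNpos hc2
  · filter_upwards [eventually_ge_atTop (x 0), hxJpos, eventually_ge_atTop 1] with N hN hJpos hN1
    have hxJ : (0:ℝ) < x (J N) := by exact_mod_cast hJpos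
    have hc1 : (cnt p N : ℝ) ≤ cnt p (x (J N + 1)) := by
      exact_mod_cast cnt_mono p (hJ2 N hN).le
    have hc2 : (x (J N) : ℝ) ≤ N := by exact_mod_cast hJ1 N hN
    exact div_le_div₀ (by positivity) hc1 hxJ hc2

open Real

/-- Bundle of parameters for `g x = c √x + b log x + C`, with a starting index `n₀`
beyond which `g` is strictly increasing. -/
structure Setup where
  c : ℝ
  b : ℝ
  C : ℝ
  hc : 0 < c
  n₀ : ℕ
  h1 : 1 ≤ (n₀ : ℝ)
  hM : (4 * (|b| + 1) / c) ^ 2 ≤ (n₀ : ℝ)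

namespace Setup

variable (S : Setup)

/-- The function `g`. -/
noncomputable def g (x : ℝ) : ℝ := S.c * Real.sqrt x + S.b * Real.log x + S.C

lemma sqrt_ge {x : ℝ} (hx : (S.n₀ : ℝ) ≤ x) : 4 * (|S.b| + 1) / S.c ≤ Real.sqrt x := by
  have hc := S.hc
  have h0 : 0 ≤ 4 * (|S.b| + 1) / S.c := by positivity
  have := Real.sqrt_le_sqrt (S.hM.trans hx)
  rwa [Real.sqrt_sq h0] at this

lemma gap {x y : ℝ} (hx : (S.n₀ : ℝ) ≤ x) (hxy : x ≤ y) :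
    S.c / 2 * (Real.sqrt y - Real.sqrt x) ≤ S.g y - S.g x := by
  have hx1 : (1:ℝ) ≤ x := S.h1.trans hx
  have hx0 : (0:ℝ) < x := lt_of_lt_of_le one_pos hx1
  have hy0 : (0:ℝ) < y := lt_of_lt_of_le hx0 hxy
  set sx := Real.sqrt x with hsx
  set sy := Real.sqrt y with hsy
  have hsx0 : 0 < sx := Real.sqrt_pos.2 hx0
  have hsy0 : 0 < sy := Real.sqrt_pos.2 hy0
  have hsxy : sx ≤ sy := Real.sqrt_le_sqrt hxy
  have hsxM : 4 * (|S.b| + 1) / S.c ≤ sx := S.sqrt_ge hx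
  -- log y - log x ≤ 2 (sy - sx) / sx
  have hlog : Real.log y - Real.log x ≤ 2 * ((sy - sx) / sx) := by
    have h1 : Real.log y = 2 * Real.log sy := by
      rw [hsy, Real.log_sqrt hy0.le]; ring
    have h2 : Real.log x = 2 * Real.log sx := by
      rw [hsx, Real.log_sqrt hx0.le]; ring
    have h3 : Real.log sy - Real.log sx ≤ (sy - sx) / sx := by
      have := Real.log_le_sub_one_of_pos (show 0 < sy / sx by positivity)
      rw [Real.log_div hsy0.ne' hsx0.ne'] at this
      calc Real.log sy - Real.log sx ≤ sy / sx - 1 := this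
        _ = (sy - sx) / sx := by field_simp
    rw [h1, h2]; nlinarith
  have hlog0 : 0 ≤ Real.log y - Real.log x := by
    have := Real.log_le_log hx0 hxy
    linarith
  have hb : S.b * (Real.log y - Real.log x) ≥ -(|S.b| * (2 * ((sy - sx) / sx))) := by
    have h1 : S.b * (Real.log y - Real.log x) ≥ -(|S.b| * (Real.log y - Real.log x)) := by
      have := neg_abs_le S.b
      nlinarith
    have h2 : |S.b| * (Real.log y - Real.log x) ≤ |S.b| * (2 * ((sy - sx) / sx)) := by
      apply mul_le_mul_of_nonneg_left hlog (abs_nonneg _)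
    linarith
  have hkey : 2 * |S.b| / sx ≤ S.c / 2 := by
    rw [div_le_div_iff₀ hsx0 (by norm_num : (0:ℝ) < 2)]
    have : (4 * (|S.b| + 1) / S.c) * S.c = 4 * (|S.b| + 1) := by
      rw [div_mul_cancel₀ _ S.hc.ne']
    nlinarith [mul_le_mul_of_nonneg_right hsxM S.hc.le]
  have expand : S.g y - S.g x = S.c * (sy - sx) + S.b * (Real.log y - Real.log x) := by
    simp only [g]; ring
  rw [expand]
  have hsd : 0 ≤ sy - sx := by linarith
  have : |S.b| * (2 * ((sy - sx) / sx)) = (2 * |S.b| / sx) * (sy - sx) := by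
    field_simp
  nlinarith [mul_le_mul_of_nonneg_right hkey hsd]

lemma g_mono {x y : ℝ} (hx : (S.n₀ : ℝ) ≤ x) (hxy : x ≤ y) : S.g x ≤ S.g y := by
  have h := S.gap hx hxy
  have : 0 ≤ Real.sqrt y - Real.sqrt x := by
    have := Real.sqrt_le_sqrt hxy; linarith
  nlinarith [S.hc]

lemma g_strictMono {x y : ℝ} (hx : (S.n₀ : ℝ) ≤ x) (hxy : x < y) : S.g x < S.g y := by
  have h := S.gap hx hxy.le
  have hx0 : (0:ℝ) ≤ x := le_trans (by linarith [S.h1]) hx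
  have : 0 < Real.sqrt y - Real.sqrt x := by
    have := Real.sqrt_lt_sqrt hx0 hxy; linarith
  nlinarith [S.hc]

lemma g_tendsto : Tendsto (fun x : ℝ => S.g x) atTop atTop := by
  have hsq : Tendsto Real.sqrt atTop atTop := by
    have h := tendsto_rpow_atTop (by norm_num : (0:ℝ) < 1/2)
    refine h.congr' ?_
    filter_upwards [eventually_ge_atTop (0:ℝ)] with x hx
    exact (Real.sqrt_eq_rpow x).symm
  have hlb : ∀ᶠ x : ℝ in atTop, S.g (S.n₀) + S.c / 2 * (Real.sqrt x - Real.sqrt S.n₀) ≤ S.g x := by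
    filter_upwards [eventually_ge_atTop ((S.n₀ : ℝ))] with x hx
    have := S.gap (le_refl (S.n₀ : ℝ)) hx
    linarith
  refine tendsto_atTop_mono' atTop hlb ?_
  have h2 : Tendsto (fun x : ℝ => S.c / 2 * (Real.sqrt x - Real.sqrt S.n₀)) atTop atTop := by
    refine Tendsto.const_mul_atTop (by have := S.hc; positivity) ?_
    exact (tendsto_atTop_add_const_right _ _ hsq)
  exact tendsto_atTop_add_const_left _ _ h2


lemma hex (T : ℝ) : ∃ n : ℕ, S.n₀ ≤ n ∧ T ≤ S.g n := by
  have h1 : Tendsto (fun n : ℕ => S.g n) atTop atTop :=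
    S.g_tendsto.comp tendsto_natCast_atTop_atTop
  exact ((h1.eventually_ge_atTop T).and (eventually_ge_atTop S.n₀)).exists.imp
    (fun n h => ⟨h.2, h.1⟩)

open scoped Classical in
/-- Least `n ≥ n₀` with `T ≤ g n`. -/
noncomputable def nu (T : ℝ) : ℕ := Nat.find (S.hex T)

lemma nu_ge (T : ℝ) : S.n₀ ≤ S.nu T := (Nat.find_spec (S.hex T)).1

lemma le_g_nu (T : ℝ) : T ≤ S.g (S.nu T) := (Nat.find_spec (S.hex T)).2

lemma g_lt_of_lt (T : ℝ) {n : ℕ} (hn : S.n₀ ≤ n) (h : n < S.nu T) : S.g n < T := by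
  classical
  have := Nat.find_min (S.hex T) h
  push_neg at this
  exact lt_of_not_ge fun hc => absurd (this hn) (not_lt.2 hc)

lemma lt_nu_iff (T : ℝ) {n : ℕ} (hn : S.n₀ ≤ n) : n < S.nu T ↔ S.g n < T := by
  constructor
  · exact S.g_lt_of_lt T hn
  · intro h
    by_contra hc
    push_neg at hc
    have : S.g (S.nu T) ≤ S.g n := S.g_mono (by exact_mod_cast S.nu_ge T) (by exact_mod_cast hc)
    linarith [S.le_g_nu T]

lemma nu_mono : Monotone S.nu := by
  intro T U h
  by_contra hc
  push_neg at hc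
  have h1 : S.g (S.nu U) < T := S.g_lt_of_lt T (S.nu_ge U) hc
  linarith [S.le_g_nu U]

lemma nu_tendsto : Tendsto S.nu atTop atTop := by
  rw [tendsto_atTop_atTop]
  intro K
  refine ⟨S.g (max K S.n₀) + 1, fun T hT => ?_⟩
  have h1 : max K S.n₀ < S.nu T := by
    rw [S.lt_nu_iff T (le_max_right _ _)]
    push_cast
    linarith
  exact le_trans (le_max_left _ _) h1.le

/-- `w T = √(nu T)`. -/
noncomputable def w (T : ℝ) : ℝ := Real.sqrt (S.nu T)

lemma w_tendsto : Tendsto S.w atTop atTop := by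
  have hsq : Tendsto Real.sqrt atTop atTop := by
    have h := tendsto_rpow_atTop (by norm_num : (0:ℝ) < 1/2)
    refine h.congr' ?_
    filter_upwards [eventually_ge_atTop (0:ℝ)] with x hx
    exact (Real.sqrt_eq_rpow x).symm
  exact hsq.comp (tendsto_natCast_atTop_atTop.comp S.nu_tendsto)

lemma w_mono : Monotone S.w := fun T U h =>
  Real.sqrt_le_sqrt (by exact_mod_cast S.nu_mono h)


set_option maxHeartbeats 1600000 in
/-- Key asymptotics: `√(nu (T+h)) - √(nu T) → h/c`. -/
lemma delta {h : ℝ} (hh : 0 ≤ h) :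
    Tendsto (fun T => S.w (T + h) - S.w T) atTop (𝓝 (h / S.c)) := by
  have hc := S.hc
  set Dm : ℝ := 2 * (h + 1 + S.c) / S.c with hDm_def
  set e : ℝ → ℝ := fun T => 2 * |S.b| * Dm / S.w T + |S.b| / ((S.nu T : ℝ) - 1) + S.c / S.w T
    with he_def
  have he0 : Tendsto e atTop (𝓝 0) := by
    have hw := S.w_tendsto
    have hnuR : Tendsto (fun T => (S.nu T : ℝ)) atTop atTop :=
      tendsto_natCast_atTop_atTop.comp S.nu_tendsto
    have h1 : Tendsto (fun T => 2 * |S.b| * Dm / S.w T) atTop (𝓝 0) :=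
      Tendsto.div_atTop tendsto_const_nhds hw
    have h2 : Tendsto (fun T => |S.b| / ((S.nu T : ℝ) - 1)) atTop (𝓝 0) :=
      Tendsto.div_atTop tendsto_const_nhds (tendsto_atTop_add_const_right _ _ hnuR)
    have h3 : Tendsto (fun T => S.c / S.w T) atTop (𝓝 0) :=
      Tendsto.div_atTop tendsto_const_nhds hw
    have := (h1.add h2).add h3
    simpa using this
  -- the eventual two-sided bound
  have hbound : ∀ᶠ T in atTop,
      (h - e T) / S.c ≤ S.w (T + h) - S.w T ∧ S.w (T + h) - S.w T ≤ (h + e T) / S.c := by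
    filter_upwards [S.nu_tendsto.eventually_ge_atTop (S.n₀ + 2),
      S.w_tendsto.eventually_ge_atTop (max (4 * (|S.b| + 1) / S.c) 1),
      (tendsto_natCast_atTop_atTop.comp S.nu_tendsto).eventually_ge_atTop (|S.b| + 2)]
      with T hn1 hwT hA1b
    set n1 := S.nu T with hn1_def
    set n2 := S.nu (T + h) with hn2_def
    have hn12 : n1 ≤ n2 := S.nu_mono (by linarith)
    have hn2' : S.n₀ + 2 ≤ n2 := le_trans hn1 hn12
    set A1 : ℝ := (n1 : ℝ) with hA1_def
    set A2 : ℝ := (n2 : ℝ) with hA2_def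
    have hA12 : A1 ≤ A2 := by rw [hA1_def, hA2_def]; exact_mod_cast hn12
    have hA1_ge : (S.n₀ : ℝ) + 2 ≤ A1 := by rw [hA1_def]; exact_mod_cast hn1
    have hn₀1 : (1:ℝ) ≤ (S.n₀ : ℝ) := S.h1
    have hA1_3 : (3:ℝ) ≤ A1 := by linarith
    have hA2_3 : (3:ℝ) ≤ A2 := by linarith
    set w1 := S.w T with hw1_def
    set w2 := S.w (T + h) with hw2_def
    set r1 := Real.sqrt (A1 - 1) with hr1_def
    set r2 := Real.sqrt (A2 - 1) with hr2_def
    have hw1sq : w1 ^ 2 = A1 := Real.sq_sqrt (by linarith)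
    have hw2sq : w2 ^ 2 = A2 := Real.sq_sqrt (by linarith)
    have hr1sq : r1 ^ 2 = A1 - 1 := Real.sq_sqrt (by linarith)
    have hr2sq : r2 ^ 2 = A2 - 1 := Real.sq_sqrt (by linarith)
    have hw1_1 : (1:ℝ) ≤ w1 := le_trans (le_max_right _ _) hwT
    have hw1_M : 4 * (|S.b| + 1) / S.c ≤ w1 := le_trans (le_max_left _ _) hwT
    have hw1pos : (0:ℝ) < w1 := by linarith
    have hw12 : w1 ≤ w2 := S.w_mono (by linarith)
    have hw2pos : (0:ℝ) < w2 := by linarith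
    have hr1nn : (0:ℝ) ≤ r1 := Real.sqrt_nonneg _
    have hr2nn : (0:ℝ) ≤ r2 := Real.sqrt_nonneg _
    have hr1w1 : r1 ≤ w1 := Real.sqrt_le_sqrt (by linarith)
    have hr2w2 : r2 ≤ w2 := Real.sqrt_le_sqrt (by linarith)
    have hr1pos : (0:ℝ) < r1 := Real.sqrt_pos.2 (by linarith)
    have hr2pos : (0:ℝ) < r2 := Real.sqrt_pos.2 (by linarith)
    set D := w2 - w1 with hD_def
    clear_value D
    have hDnn : 0 ≤ D := by linarith
    -- expanded g inequalities
    have cast1 : ((n1 - 1 : ℕ) : ℝ) = A1 - 1 := by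
      have : 1 ≤ n1 := by omega
      push_cast [this]; ring
    have cast2 : ((n2 - 1 : ℕ) : ℝ) = A2 - 1 := by
      have : 1 ≤ n2 := by omega
      push_cast [this]; ring
    have hub2 : S.c * r2 + S.b * Real.log (A2 - 1) + S.C < T + h := by
      have h1 : (n2 - 1 : ℕ) < n2 := by omega
      have h2 : S.n₀ ≤ n2 - 1 := by omega
      have := S.g_lt_of_lt (T + h) h2 (by rw [← hn2_def]; exact h1)
      rwa [Setup.g, cast2, ← hr2_def] at this
    have hw1A : w1 = Real.sqrt A1 := by rw [hw1_def, hA1_def, hn1_def]; rfl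
    have hw2A : w2 = Real.sqrt A2 := by rw [hw2_def, hA2_def, hn2_def]; rfl
    have hlb1 : T ≤ S.c * w1 + S.b * Real.log A1 + S.C := by
      have h0 := S.le_g_nu T
      rw [Setup.g, ← hn1_def, ← hA1_def, ← hw1A] at h0
      exact h0
    have hlb2 : T + h ≤ S.c * w2 + S.b * Real.log A2 + S.C := by
      have h0 := S.le_g_nu (T + h)
      rw [Setup.g, ← hn2_def, ← hA2_def, ← hw2A] at h0
      exact h0
    have hub1 : S.c * r1 + S.b * Real.log (A1 - 1) + S.C < T := by
      have h1 : (n1 - 1 : ℕ) < n1 := by omega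
      have h2 : S.n₀ ≤ n1 - 1 := by omega
      have h0 := S.g_lt_of_lt T h2 (by rw [← hn1_def]; exact h1)
      rwa [Setup.g, cast1, ← hr1_def] at h0
    have hA1b' : |S.b| + 2 ≤ A1 := by rw [hA1_def, hn1_def]; exact hA1b
    have heT : e T = 2 * |S.b| * Dm / w1 + |S.b| / (A1 - 1) + S.c / w1 := by
      simp only [he_def]
      rfl
    clear_value n1 n2 A1 A2 w1 w2 r1 r2
    clear hn1_def hn2_def hA1_def hA2_def hw1_def hw2_def hr1_def hr2_def hw1A hw2A cast1 cast2
    -- logarithm bounds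
    have hlog_le : ∀ u v : ℝ, 0 < u → u ≤ v → Real.log v - Real.log u ≤ (v - u) / u := by
      intro u v hu huv
      have hv : 0 < v := lt_of_lt_of_le hu huv
      have h0 := Real.log_le_sub_one_of_pos (show 0 < v / u by positivity)
      rw [Real.log_div hv.ne' hu.ne'] at h0
      have h1 : v / u - 1 = (v - u) / u := by field_simp
      linarith
    have hlg1 : Real.log A1 - Real.log (A1 - 1) ≤ 1 / (A1 - 1) := by
      have h0 := hlog_le (A1 - 1) A1 (by linarith) (by linarith)
      have h1 : (A1 - (A1 - 1)) / (A1 - 1) = 1 / (A1 - 1) := by ring_nf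
      linarith
    have hlg2 : Real.log A2 - Real.log A1 ≤ 2 * (D / w1) := by
      have hl2 : Real.log A2 = 2 * Real.log w2 := by
        rw [← hw2sq, Real.log_pow]; push_cast; ring
      have hl1 : Real.log A1 = 2 * Real.log w1 := by
        rw [← hw1sq, Real.log_pow]; push_cast; ring
      have h0 := hlog_le w1 w2 hw1pos hw12
      rw [hl1, hl2, hD_def]
      linarith
    have m1 : Real.log (A1 - 1) ≤ Real.log (A2 - 1) := Real.log_le_log (by linarith) (by linarith)
    have m2 : Real.log A1 ≤ Real.log A2 := Real.log_le_log (by linarith) hA12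
    have m3 : Real.log (A1 - 1) ≤ Real.log A1 := Real.log_le_log (by linarith) (by linarith)
    have m4 : Real.log (A2 - 1) ≤ Real.log A2 := Real.log_le_log (by linarith) (by linarith)
    set Y := Real.log A2 - Real.log (A1 - 1) with hY_def
    clear_value Y
    have hY0 : 0 ≤ Y := by rw [hY_def]; linarith
    have hYb : Y ≤ 2 * (D / w1) + 1 / (A1 - 1) := by rw [hY_def]; linarith
    have hkey1 : S.b * (Real.log A1 - Real.log (A2 - 1)) ≤ |S.b| * Y := by
      have habs : |Real.log A1 - Real.log (A2 - 1)| ≤ Y := abs_le.2 ⟨by rw [hY_def]; linarith, by rw [hY_def]; linarith⟩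
      calc S.b * (Real.log A1 - Real.log (A2 - 1)) ≤ |S.b * (Real.log A1 - Real.log (A2 - 1))| :=
            le_abs_self _
        _ = |S.b| * |Real.log A1 - Real.log (A2 - 1)| := abs_mul _ _
        _ ≤ |S.b| * Y := mul_le_mul_of_nonneg_left habs (abs_nonneg _)
    have hkey2 : -(|S.b| * Y) ≤ S.b * (Real.log (A1 - 1) - Real.log A2) := by
      have habs : |Real.log (A1 - 1) - Real.log A2| ≤ Y := by
        rw [abs_le]; constructor
        · rw [hY_def]; linarith
        · rw [hY_def]; linarith
      have h1 : -(S.b * (Real.log (A1 - 1) - Real.log A2)) ≤ |S.b| * Y := by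
        calc -(S.b * (Real.log (A1 - 1) - Real.log A2))
            ≤ |S.b * (Real.log (A1 - 1) - Real.log A2)| := neg_le_abs _
          _ = |S.b| * |Real.log (A1 - 1) - Real.log A2| := abs_mul _ _
          _ ≤ |S.b| * Y := mul_le_mul_of_nonneg_left habs (abs_nonneg _)
      linarith
    -- sqrt gap bounds
    have hf1 : w1 - r1 ≤ 1 / w1 := by
      have hfac : (w1 - r1) * (w1 + r1) = 1 := by
        have h0 : w1 ^ 2 - r1 ^ 2 = 1 := by rw [hw1sq, hr1sq]; ring
        linear_combination h0
      have heq : w1 - r1 = 1 / (w1 + r1) := eq_div_of_mul_eq (by positivity) hfac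
      rw [heq]
      exact one_div_le_one_div_of_le hw1pos (by linarith)
    have hf2 : w2 - r2 ≤ 1 / w1 := by
      have hfac : (w2 - r2) * (w2 + r2) = 1 := by
        have h0 : w2 ^ 2 - r2 ^ 2 = 1 := by rw [hw2sq, hr2sq]; ring
        linear_combination h0
      have heq : w2 - r2 = 1 / (w2 + r2) := eq_div_of_mul_eq (by positivity) hfac
      rw [heq]
      exact one_div_le_one_div_of_le hw1pos (by linarith)
    -- main upper bound
    have hYb' : |S.b| * Y ≤ |S.b| * (2 * (D / w1) + 1 / (A1 - 1)) :=
      mul_le_mul_of_nonneg_left hYb (abs_nonneg _)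
    have hUB : S.c * D ≤ h + |S.b| * (2 * (D / w1) + 1 / (A1 - 1)) + S.c * (1 / w1) := by
      have step1 : S.c * (r2 - w1) < h + S.b * (Real.log A1 - Real.log (A2 - 1)) := by
        linarith [hub2, hlb1]
      have step2 : S.c * (w2 - r2) ≤ S.c * (1 / w1) := mul_le_mul_of_nonneg_left hf2 hc.le
      have hid : S.c * D = S.c * (r2 - w1) + S.c * (w2 - r2) := by rw [hD_def]; ring
      linarith [hkey1, hYb']
    have hLB : h - |S.b| * (2 * (D / w1) + 1 / (A1 - 1)) - S.c * (1 / w1) ≤ S.c * D := by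
      have step1 : h + S.b * (Real.log (A1 - 1) - Real.log A2) < S.c * (w2 - r1) := by
        linarith [hlb2, hub1]
      have step2 : S.c * (w1 - r1) ≤ S.c * (1 / w1) := mul_le_mul_of_nonneg_left hf1 hc.le
      have hid : S.c * D = S.c * (w2 - r1) - S.c * (w1 - r1) := by rw [hD_def]; ring
      have step3 : -(|S.b| * (2 * (D / w1) + 1 / (A1 - 1))) ≤
          S.b * (Real.log (A1 - 1) - Real.log A2) := by linarith [hkey2, hYb']
      linarith
    -- boundedness of D
    have hDw : 2 * |S.b| / w1 ≤ S.c / 2 := by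
      rw [div_le_div_iff₀ hw1pos (by norm_num : (0:ℝ) < 2)]
      have h4 : 4 * (|S.b| + 1) = (4 * (|S.b| + 1) / S.c) * S.c := by field_simp
      have hprod := mul_le_mul_of_nonneg_right hw1_M hc.le
      have habs : 0 ≤ |S.b| := abs_nonneg _
      linarith [hprod, h4, habs]
    have hterm : |S.b| * (2 * (D / w1)) = (2 * |S.b| / w1) * D := by field_simp
    have hD1 : |S.b| * (1 / (A1 - 1)) ≤ 1 := by
      rw [mul_one_div, div_le_one (by linarith)]
      linarith
    have hc1 : S.c * (1 / w1) ≤ S.c := by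
      have h0 : 1 / w1 ≤ 1 := by rw [div_le_one hw1pos]; exact hw1_1
      calc S.c * (1 / w1) ≤ S.c * 1 := mul_le_mul_of_nonneg_left h0 hc.le
        _ = S.c := mul_one _
    have hDDm : D ≤ Dm := by
      have h1 : (2 * |S.b| / w1) * D ≤ (S.c / 2) * D := mul_le_mul_of_nonneg_right hDw hDnn
      have hexp : |S.b| * (2 * (D / w1) + 1 / (A1 - 1)) =
          |S.b| * (2 * (D / w1)) + |S.b| * (1 / (A1 - 1)) := by ring
      have h2 : S.c * D ≤ h + S.c / 2 * D + 1 + S.c := by linarith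
      rw [hDm_def, le_div_iff₀ hc]
      linarith
    -- final bounds
    have hDm2 : 2 * |S.b| * (D / w1) ≤ 2 * |S.b| * Dm / w1 := by
      have h0 : D / w1 ≤ Dm / w1 := by
        exact (div_le_div_iff_of_pos_right hw1pos).2 hDDm
      calc 2 * |S.b| * (D / w1) ≤ 2 * |S.b| * (Dm / w1) :=
            mul_le_mul_of_nonneg_left h0 (by positivity)
        _ = 2 * |S.b| * Dm / w1 := by ring
    have hexp : |S.b| * (2 * (D / w1) + 1 / (A1 - 1)) =
        2 * |S.b| * (D / w1) + |S.b| / (A1 - 1) := by ring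
    have hcw : S.c * (1 / w1) = S.c / w1 := by ring
    constructor
    · rw [div_le_iff₀ hc]
      rw [heT]
      linarith [hLB, hDm2]
    · rw [le_div_iff₀ hc]
      rw [heT]
      linarith [hUB, hDm2]
  have hlo : Tendsto (fun T => (h - e T) / S.c) atTop (𝓝 (h / S.c)) := by
    have := (tendsto_const_nhds (x := h) (f := atTop (α := ℝ))).sub he0
    rw [sub_zero] at this
    exact this.div_const _
  have hhi : Tendsto (fun T => (h + e T) / S.c) atTop (𝓝 (h / S.c)) := by
    have := (tendsto_const_nhds (x := h) (f := atTop (α := ℝ))).add he0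
    rw [add_zero] at this
    exact this.div_const _
  exact tendsto_of_tendsto_of_tendsto_of_le_of_le' hlo hhi
    (hbound.mono fun T ht => ht.1) (hbound.mono fun T ht => ht.2)


set_option maxHeartbeats 1600000 in
/-- The main equidistribution counting lemma. -/
lemma count (s t : ℝ) (hst : s < t) (hts : t ≤ s + 1) :
    Tendsto (fun N => (cnt (fun n => ∃ m : ℤ,
        (m : ℝ) + s ≤ S.g n ∧ S.g n < (m : ℝ) + t) N : ℝ) / N) atTop (𝓝 (t - s)) := by
  classical
  have hc := S.hc
  set P : ℕ → Prop := fun n => ∃ m : ℤ, (m : ℝ) + s ≤ S.g n ∧ S.g n < (m : ℝ) + t with hP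
  set x : ℕ → ℕ := fun j => S.nu (s + j) with hx
  set y : ℕ → ℕ := fun j => S.nu (t + j) with hy
  have hxy : ∀ j, x j ≤ y j := fun j => S.nu_mono (by linarith)
  have hyx : ∀ j, y j ≤ x (j + 1) := fun j => S.nu_mono (by push_cast; linarith)
  have hxmono : Monotone x := fun i j hij => S.nu_mono (by
    have : (i:ℝ) ≤ j := Nat.cast_le.2 hij
    linarith)
  have hTj : Tendsto (fun j : ℕ => s + (j:ℝ)) atTop atTop :=
    tendsto_atTop_add_const_left _ s tendsto_natCast_atTop_atTop
  have hxtop : Tendsto x atTop atTop := S.nu_tendsto.comp hTj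
  have hxtopR : Tendsto (fun j => (x j : ℝ)) atTop atTop :=
    tendsto_natCast_atTop_atTop.comp hxtop
  set u : ℕ → ℝ := fun j => S.w (s + j) with hu
  set v : ℕ → ℝ := fun j => S.w (t + j) with hv
  have hv_u : Tendsto (fun j => v j - u j) atTop (𝓝 ((t - s) / S.c)) := by
    have h0 := (S.delta (h := t - s) (by linarith)).comp hTj
    refine h0.congr fun j => ?_
    simp only [hu, hv, Function.comp]
    rw [show s + (j:ℝ) + (t - s) = t + j by ring]
  have hu1 : Tendsto (fun j => u (j + 1) - u j) atTop (𝓝 (1 / S.c)) := by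
    have h0 := (S.delta (h := 1) zero_le_one).comp hTj
    refine h0.congr fun j => ?_
    simp only [hu, Function.comp]
    rw [show s + (j:ℝ) + 1 = s + ((j:ℕ) + 1 : ℕ) by push_cast; ring]
  have hutop : Tendsto u atTop atTop := S.w_tendsto.comp hTj
  have hXcast : ∀ j, ((x j : ℝ)) = (u j) ^ 2 := fun j =>
    (Real.sq_sqrt (by positivity : (0:ℝ) ≤ (x j : ℝ))).symm
  have hYcast : ∀ j, ((y j : ℝ)) = (v j) ^ 2 := fun j =>
    (Real.sq_sqrt (by positivity : (0:ℝ) ≤ (y j : ℝ))).symm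
  have hAV : ∀ j, u j ≤ v j := fun j => S.w_mono (by linarith)
  have hVB : ∀ j, v j ≤ u (j + 1) := fun j => S.w_mono (by push_cast; linarith)
  have hunn : ∀ j, 0 ≤ u j := fun j => Real.sqrt_nonneg _
  have hvnn : ∀ j, 0 ≤ v j := fun j => Real.sqrt_nonneg _
  -- exact block counting
  have hblock : ∀ j, cnt P (x (j + 1)) = cnt P (x j) + (y j - x j) := by
    intro j
    have hxj_n₀ : S.n₀ ≤ x j := S.nu_ge _
    have hchar : ∀ n, x j ≤ n → n < x (j + 1) → (P n ↔ n < y j) := by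
      intro n h1 h2
      have hn₀ : S.n₀ ≤ n := le_trans hxj_n₀ h1
      have hglow : s + (j:ℝ) ≤ S.g n := by
        by_contra hcon
        push_neg at hcon
        have hltn : n < x j := (S.lt_nu_iff (s + (j:ℝ)) hn₀).2 hcon
        omega
      have hghigh : S.g n < s + ((j:ℝ) + 1) := by
        have h3 := (S.lt_nu_iff (s + ((j + 1 : ℕ) : ℝ)) hn₀).1 h2
        push_cast at h3
        linarith
      constructor
      · rintro ⟨m, hm1, hm2⟩
        have hmj : m = (j : ℤ) := by
          have h3 : (m:ℝ) < (j:ℝ) + 1 := by linarith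
          have h4 : (j:ℝ) < (m:ℝ) + 1 := by linarith
          have h5 : (m:ℤ) < (j:ℤ) + 1 := by exact_mod_cast h3
          have h6 : (j:ℤ) < (m:ℤ) + 1 := by exact_mod_cast h4
          omega
        rw [hmj] at hm2
        rw [show ((j:ℤ):ℝ) = (j:ℝ) by push_cast; ring] at hm2
        exact (S.lt_nu_iff (t + (j:ℝ)) hn₀).2 (by linarith)
      · intro hlt
        refine ⟨(j : ℤ), ?_, ?_⟩
        · push_cast; linarith
        · have := (S.lt_nu_iff (t + (j:ℝ)) hn₀).1 hlt
          push_cast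
          linarith
    have hr : Finset.range (x (j + 1)) = Finset.range (x j) ∪ Finset.Ico (x j) (x (j + 1)) := by
      rw [Finset.range_eq_Ico, Finset.range_eq_Ico,
        Finset.Ico_union_Ico_eq_Ico (Nat.zero_le _) (show x j ≤ x (j + 1) from hxmono (Nat.le_succ j))]
    have hdisj : Disjoint (Finset.range (x j)) (Finset.Ico (x j) (x (j + 1))) := by
      rw [Finset.disjoint_left]
      intro a ha hb
      rw [Finset.mem_range] at ha
      rw [Finset.mem_Ico] at hb
      omega
    have hfilter_eq : (Finset.Ico (x j) (x (j + 1))).filter P = Finset.Ico (x j) (y j) := by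
      apply Finset.ext
      intro n
      simp only [Finset.mem_filter, Finset.mem_Ico]
      constructor
      · rintro ⟨⟨ha, hb⟩, hp⟩
        exact ⟨ha, (hchar n ha hb).1 hp⟩
      · rintro ⟨ha, hb⟩
        have hb' : n < x (j + 1) := lt_of_lt_of_le hb (hyx j)
        exact ⟨⟨ha, hb'⟩, (hchar n ha hb').2 hb⟩
    have e1 : cnt P (x (j + 1)) = ((Finset.range (x (j + 1))).filter P).card := rfl
    have e2 : cnt P (x j) = ((Finset.range (x j)).filter P).card := rfl
    rw [e1, e2, hr, Finset.filter_union, Finset.card_union_of_disjoint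
      (Finset.disjoint_filter_filter hdisj), hfilter_eq, Nat.card_Ico]
  have hrec : ∀ j, (cnt P (x (j + 1)) : ℝ) = cnt P (x j) + ((y j : ℝ) - x j) := by
    intro j
    rw [hblock j, Nat.cast_add, Nat.cast_sub (hxy j)]
  -- bounds for fixed ε
  have key : ∀ ε : ℝ, 0 < ε → ε < 1 / S.c → ε < (t - s) / S.c →
      Filter.limsup (fun j => (cnt P (x j) : ℝ) / (x j)) atTop ≤
        ((t - s) / S.c + ε) / (1 / S.c - ε) ∧
      ((t - s) / S.c - ε) / ((1 / S.c + ε) * (1 + ε)) ≤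
        Filter.liminf (fun j => (cnt P (x j) : ℝ) / (x j)) atTop := by
    intro ε hε hε1 hε2
    set q : ℝ := ((t - s) / S.c + ε) / (1 / S.c - ε) with hq_def
    set q' : ℝ := ((t - s) / S.c - ε) / ((1 / S.c + ε) * (1 + ε)) with hq'_def
    have hden1 : 0 < 1 / S.c - ε := by linarith
    have hden2 : 0 < (1 / S.c + ε) * (1 + ε) := by positivity
    have hnum1 : 0 < (t - s) / S.c + ε := by
      have : 0 < (t - s) / S.c := div_pos (by linarith) hc
      linarith
    have hnum2 : 0 < (t - s) / S.c - ε := by linarith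
    have hq0 : 0 ≤ q := le_of_lt (by rw [hq_def]; positivity)
    have hq'0 : 0 ≤ q' := le_of_lt (by rw [hq'_def]; positivity)
    have hq_eq : q * (1 / S.c - ε) = (t - s) / S.c + ε := div_mul_cancel₀ _ hden1.ne'
    have hq'_eq : q' * ((1 / S.c + ε) * (1 + ε)) = (t - s) / S.c - ε :=
      div_mul_cancel₀ _ hden2.ne'
    have hE1 : ∀ᶠ j in atTop,
        (t - s) / S.c - ε < v j - u j ∧ v j - u j < (t - s) / S.c + ε :=
      (hv_u.eventually_const_lt (by linarith)).and (hv_u.eventually_lt_const (by linarith))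
    have hE2 : ∀ᶠ j in atTop,
        1 / S.c - ε < u (j + 1) - u j ∧ u (j + 1) - u j < 1 / S.c + ε :=
      (hu1.eventually_const_lt (by linarith)).and (hu1.eventually_lt_const (by linarith))
    have hE3 : ∀ᶠ j in atTop, (1 / S.c + ε) ≤ ε * (2 * u j) := by
      have h0 : ∀ᶠ j in atTop, (1 / S.c + ε) / (2 * ε) ≤ u j :=
        hutop.eventually_ge_atTop _
      filter_upwards [h0] with j hj
      rw [div_le_iff₀ (by positivity)] at hj
      linarith
    have hper : ∀ᶠ j in atTop,
        ((y j : ℝ) - x j ≤ q * ((x (j + 1) : ℝ) - x j)) ∧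
        (q' * ((x (j + 1) : ℝ) - x j) ≤ (y j : ℝ) - x j) := by
      filter_upwards [hE1, hE2, hE3] with j h1 h2 h3
      set A := u j
      set B := u (j + 1)
      set V := v j
      have hAnn : 0 ≤ A := hunn j
      have hVA : A ≤ V := hAV j
      have hVB' : V ≤ B := hVB j
      have hXj : ((x j : ℝ)) = A ^ 2 := hXcast j
      have hXj1 : ((x (j + 1) : ℝ)) = B ^ 2 := hXcast (j + 1)
      have hYj : ((y j : ℝ)) = V ^ 2 := hYcast j
      constructor
      · rw [hXj, hXj1, hYj]
        calc V ^ 2 - A ^ 2 = (V - A) * (V + A) := by ring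
          _ ≤ ((t - s) / S.c + ε) * (V + A) :=
              mul_le_mul_of_nonneg_right (by linarith) (by linarith)
          _ ≤ ((t - s) / S.c + ε) * (B + A) :=
              mul_le_mul_of_nonneg_left (by linarith) (by linarith)
          _ = q * ((1 / S.c - ε) * (B + A)) := by rw [← hq_eq]; ring
          _ ≤ q * ((B - A) * (B + A)) :=
              mul_le_mul_of_nonneg_left
                (mul_le_mul_of_nonneg_right (by linarith) (by linarith)) hq0
          _ = q * (B ^ 2 - A ^ 2) := by ring
      · rw [hXj, hXj1, hYj]
        have hBA : B + A ≤ (1 + ε) * (2 * A) := by linarith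
        calc q' * (B ^ 2 - A ^ 2) = q' * ((B - A) * (B + A)) := by ring
          _ ≤ q' * ((1 / S.c + ε) * (B + A)) :=
              mul_le_mul_of_nonneg_left
                (mul_le_mul_of_nonneg_right (by linarith) (by linarith)) hq'0
          _ ≤ q' * ((1 / S.c + ε) * ((1 + ε) * (2 * A))) := by
              refine mul_le_mul_of_nonneg_left ?_ hq'0
              exact mul_le_mul_of_nonneg_left hBA (by positivity)
          _ = (q' * ((1 / S.c + ε) * (1 + ε))) * (2 * A) := by ring
          _ = ((t - s) / S.c - ε) * (2 * A) := by rw [hq'_eq]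
          _ ≤ (V - A) * (V + A) := by
              have hm1 : (t - s) / S.c - ε ≤ V - A := by linarith
              have hm2 : 2 * A ≤ V + A := by linarith
              exact mul_le_mul hm1 hm2 (by positivity) (by linarith)
          _ = V ^ 2 - A ^ 2 := by ring
    obtain ⟨J, hJ⟩ := eventually_atTop.1 hper
    -- summed bounds by induction
    have hub_sum : ∀ j, J ≤ j →
        (cnt P (x j) : ℝ) ≤ cnt P (x J) + q * ((x j : ℝ) - x J) := by
      intro j hj
      induction j, hj using Nat.le_induction with
      | base => simp
      | succ j hj ih =>
        have h1 := (hJ j hj).1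
        have h2 := hrec j
        have h3 : (cnt P (x j) : ℝ) ≤ cnt P (x (j + 1)) := by
          exact_mod_cast cnt_mono P (hxmono (Nat.le_succ j))
        linarith
    have hlb_sum : ∀ j, J ≤ j →
        (cnt P (x J) : ℝ) + q' * ((x j : ℝ) - x J) ≤ cnt P (x j) := by
      intro j hj
      induction j, hj using Nat.le_induction with
      | base => simp
      | succ j hj ih =>
        have h1 := (hJ j hj).2
        have h2 := hrec j
        linarith
    -- pass to limsup / liminf
    have herr1 : Tendsto (fun j => ((cnt P (x J) : ℝ) - q * (x J)) / (x j)) atTop (𝓝 0) :=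
      Tendsto.div_atTop tendsto_const_nhds hxtopR
    have herr2 : Tendsto (fun j => ((cnt P (x J) : ℝ) - q' * (x J)) / (x j)) atTop (𝓝 0) :=
      Tendsto.div_atTop tendsto_const_nhds hxtopR
    have hb_above : Filter.IsBoundedUnder (· ≤ ·) atTop
        (fun j => (cnt P (x j) : ℝ) / (x j)) :=
      isBoundedUnder_of ⟨1, fun j => cnt_div_le_one P (x j)⟩
    have hb_below : Filter.IsBoundedUnder (· ≥ ·) atTop
        (fun j => (cnt P (x j) : ℝ) / (x j)) :=
      isBoundedUnder_of ⟨0, fun j => cnt_div_nonneg P (x j)⟩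
    constructor
    · have hcomp : ∀ᶠ j in atTop, (cnt P (x j) : ℝ) / (x j) ≤
          q + ((cnt P (x J) : ℝ) - q * (x J)) / (x j) := by
        filter_upwards [eventually_ge_atTop J, hxtopR.eventually_ge_atTop 1] with j hj hx1
        have hxpos : (0:ℝ) < (x j : ℝ) := by linarith
        have h0 := hub_sum j hj
        rw [div_le_iff₀ hxpos]
        have heq : (q + ((cnt P (x J) : ℝ) - q * (x J)) / (x j)) * (x j)
            = (cnt P (x J) : ℝ) + q * ((x j : ℝ) - x J) := by
          field_simp
          ring
        linarith [h0, heq.ge, heq.le]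
      have hlim2 : Tendsto (fun j => q + ((cnt P (x J) : ℝ) - q * (x J)) / (x j))
          atTop (𝓝 q) := by
        have := tendsto_const_nhds (x := q) (f := atTop (α := ℕ)) |>.add herr1
        simpa using this
      calc Filter.limsup (fun j => (cnt P (x j) : ℝ) / (x j)) atTop
          ≤ Filter.limsup (fun j => q + ((cnt P (x J) : ℝ) - q * (x J)) / (x j)) atTop :=
            limsup_le_limsup hcomp hb_below.isCoboundedUnder_le hlim2.isBoundedUnder_le
        _ = q := hlim2.limsup_eq
    · have hcomp : ∀ᶠ j in atTop, q' + ((cnt P (x J) : ℝ) - q' * (x J)) / (x j) ≤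
          (cnt P (x j) : ℝ) / (x j) := by
        filter_upwards [eventually_ge_atTop J, hxtopR.eventually_ge_atTop 1] with j hj hx1
        have hxpos : (0:ℝ) < (x j : ℝ) := by linarith
        have h0 := hlb_sum j hj
        rw [le_div_iff₀ hxpos]
        have heq : (q' + ((cnt P (x J) : ℝ) - q' * (x J)) / (x j)) * (x j)
            = (cnt P (x J) : ℝ) + q' * ((x j : ℝ) - x J) := by
          field_simp
          ring
        linarith [h0, heq.ge, heq.le]
      have hlim2 : Tendsto (fun j => q' + ((cnt P (x J) : ℝ) - q' * (x J)) / (x j))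
          atTop (𝓝 q') := by
        have := tendsto_const_nhds (x := q') (f := atTop (α := ℕ)) |>.add herr2
        simpa using this
      calc q' = Filter.liminf (fun j => q' + ((cnt P (x J) : ℝ) - q' * (x J)) / (x j)) atTop :=
            hlim2.liminf_eq.symm
        _ ≤ Filter.liminf (fun j => (cnt P (x j) : ℝ) / (x j)) atTop :=
            liminf_le_liminf hcomp hlim2.isBoundedUnder_ge hb_above.isCoboundedUnder_ge
  -- conclude the subsequence limit
  have hb_above : Filter.IsBoundedUnder (· ≤ ·) atTop
      (fun j => (cnt P (x j) : ℝ) / (x j)) :=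
    isBoundedUnder_of ⟨1, fun j => cnt_div_le_one P (x j)⟩
  have hb_below : Filter.IsBoundedUnder (· ≥ ·) atTop
      (fun j => (cnt P (x j) : ℝ) / (x j)) :=
    isBoundedUnder_of ⟨0, fun j => cnt_div_nonneg P (x j)⟩
  have hzero : Tendsto (fun ε : ℝ => ε) (𝓝[>] (0:ℝ)) (𝓝 0) :=
    tendsto_id.mono_left nhdsWithin_le_nhds
  have hsup : Filter.limsup (fun j => (cnt P (x j) : ℝ) / (x j)) atTop ≤ t - s := by
    by_contra hcon
    push_neg at hcon
    have hqt : Tendsto (fun ε : ℝ => ((t - s) / S.c + ε) / (1 / S.c - ε)) (𝓝[>] 0)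
        (𝓝 (t - s)) := by
      have hcont : ContinuousAt (fun ε : ℝ => ((t - s) / S.c + ε) / (1 / S.c - ε)) 0 := by
        apply ContinuousAt.div
        · exact continuousAt_const.add continuousAt_id
        · exact continuousAt_const.sub continuousAt_id
        · simp only [sub_zero]
          positivity
      have hval : ((t - s) / S.c + 0) / (1 / S.c - 0) = t - s := by
        field_simp
        ring
      have h0 := hcont.tendsto.mono_left (nhdsWithin_le_nhds (s := Set.Ioi (0:ℝ)))
      rwa [hval] at h0
    have hev1 : ∀ᶠ ε in 𝓝[>] (0:ℝ), ((t - s) / S.c + ε) / (1 / S.c - ε) <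
        Filter.limsup (fun j => (cnt P (x j) : ℝ) / (x j)) atTop :=
      hqt.eventually_lt_const hcon
    have hev2 : ∀ᶠ ε in 𝓝[>] (0:ℝ), ε < 1 / S.c := hzero.eventually_lt_const (by positivity)
    have hev3 : ∀ᶠ ε in 𝓝[>] (0:ℝ), ε < (t - s) / S.c :=
      hzero.eventually_lt_const (div_pos (by linarith) hc)
    have hev0 : ∀ᶠ ε in 𝓝[>] (0:ℝ), 0 < ε := eventually_mem_nhdsWithin
    obtain ⟨ε, h1, h2, h3, h0⟩ := (hev1.and (hev2.and (hev3.and hev0))).exists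
    exact absurd (key ε h0 h2 h3).1 (not_le.2 h1)
  have hinf : t - s ≤ Filter.liminf (fun j => (cnt P (x j) : ℝ) / (x j)) atTop := by
    by_contra hcon
    push_neg at hcon
    have hqt : Tendsto (fun ε : ℝ => ((t - s) / S.c - ε) / ((1 / S.c + ε) * (1 + ε)))
        (𝓝[>] 0) (𝓝 (t - s)) := by
      have hcont : ContinuousAt
          (fun ε : ℝ => ((t - s) / S.c - ε) / ((1 / S.c + ε) * (1 + ε))) 0 := by
        apply ContinuousAt.div
        · exact continuousAt_const.sub continuousAt_id
        · exact (continuousAt_const.add continuousAt_id).mul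
            (continuousAt_const.add continuousAt_id)
        · simp only [add_zero]
          positivity
      have hval : ((t - s) / S.c - 0) / ((1 / S.c + 0) * (1 + 0)) = t - s := by
        field_simp
        ring
      have h0 := hcont.tendsto.mono_left (nhdsWithin_le_nhds (s := Set.Ioi (0:ℝ)))
      rwa [hval] at h0
    have hev1 : ∀ᶠ ε in 𝓝[>] (0:ℝ),
        Filter.liminf (fun j => (cnt P (x j) : ℝ) / (x j)) atTop <
          ((t - s) / S.c - ε) / ((1 / S.c + ε) * (1 + ε)) :=
      hqt.eventually_const_lt hcon
    have hev2 : ∀ᶠ ε in 𝓝[>] (0:ℝ), ε < 1 / S.c := hzero.eventually_lt_const (by positivity)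
    have hev3 : ∀ᶠ ε in 𝓝[>] (0:ℝ), ε < (t - s) / S.c :=
      hzero.eventually_lt_const (div_pos (by linarith) hc)
    obtain ⟨ε, h1, h2, h3, h0⟩ :=
      (hev1.and (hev2.and (hev3.and eventually_mem_nhdsWithin))).exists
    exact absurd (key ε h0 h2 h3).2 (not_le.2 h1)
  have hfin : Tendsto (fun j => (cnt P (x j) : ℝ) / (x j)) atTop (𝓝 (t - s)) :=
    tendsto_of_le_liminf_of_limsup_le hinf hsup hb_above hb_below
  -- ratio of consecutive subsequence terms
  have hupos : ∀ᶠ j in atTop, (1:ℝ) ≤ u j := hutop.eventually_ge_atTop 1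
  have hraw : Tendsto (fun j => (u (j + 1)) / (u j)) atTop (𝓝 1) := by
    have h0 : Tendsto (fun j => (u (j + 1) - u j) / (u j)) atTop (𝓝 0) :=
      Tendsto.div_atTop hu1 hutop
    have h1 := tendsto_const_nhds (x := (1:ℝ)) (f := atTop (α := ℕ)) |>.add h0
    rw [add_zero] at h1
    refine h1.congr' ?_
    filter_upwards [hupos] with j hj
    have hne : u j ≠ 0 := by linarith
    field_simp
    ring
  have hratio : Tendsto (fun j => ((x (j + 1) : ℝ)) / (x j)) atTop (𝓝 1) := by
    have h0 := hraw.mul hraw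
    rw [mul_one] at h0
    refine h0.congr' ?_
    filter_upwards [hupos] with j hj
    have h1 : u j ≠ 0 := by linarith
    rw [hXcast j, hXcast (j + 1)]
    field_simp
  exact tendsto_cnt_div_of_subseq P x (t - s) hxmono hxtop hratio hfin

end Setup

/-- Core equidistribution result, packaged. -/
lemma core (c b C : ℝ) (hc : 0 < c) (s t : ℝ) (hst : s < t) (hts : t ≤ s + 1) :
    Tendsto (fun N => (cnt (fun n => ∃ m : ℤ,
      (m : ℝ) + s ≤ c * Real.sqrt n + b * Real.log n + C ∧
      c * Real.sqrt n + b * Real.log n + C < (m : ℝ) + t) N : ℝ) / N) atTop (𝓝 (t - s)) := by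
  obtain ⟨n₀, hn₀⟩ := exists_nat_ge (max 1 ((4 * (|b| + 1) / c) ^ 2))
  exact Setup.count ⟨c, b, C, hc, n₀, le_trans (le_max_left _ _) hn₀,
    le_trans (le_max_right _ _) hn₀⟩ s t hst hts

lemma core_g_tendsto (c b C : ℝ) (hc : 0 < c) :
    Tendsto (fun n : ℕ => c * Real.sqrt n + b * Real.log n + C) atTop atTop := by
  obtain ⟨n₀, hn₀⟩ := exists_nat_ge (max 1 ((4 * (|b| + 1) / c) ^ 2))
  exact (Setup.g_tendsto ⟨c, b, C, hc, n₀, le_trans (le_max_left _ _) hn₀,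
    le_trans (le_max_right _ _) hn₀⟩).comp tendsto_natCast_atTop_atTop

end BenfordAux

open BenfordAux in
set_option maxHeartbeats 1600000 in
/-- If `|a(n)| ~ K·n^β·e^{α√n}` with `K, α > 0`, then `a` is Benford. -/
theorem isBenford_of_bessel_asymp (a : ℕ → ℤ) (ha : ∀ n, a n ≠ 0)
    (K α β : ℝ) (hK : 0 < K) (hα : 0 < α)
    (hasymp : Tendsto
      (fun n : ℕ =>
        |(a n : ℝ)| / (K * (n : ℝ) ^ β * Real.exp (α * Real.sqrt n)))
      atTop (𝓝 1)) :
    IsBenford (fun n => (a n : ℝ)) := by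
  intro k hk d hd
  have hk1 : (1:ℝ) < (k:ℝ) := by exact_mod_cast hk
  have hlogk : 0 < Real.log k := Real.log_pos hk1
  have hd1 : (1:ℝ) ≤ (d:ℝ) := by exact_mod_cast hd
  have hd0 : (0:ℝ) < (d:ℝ) := by linarith
  set c : ℝ := α / Real.log k with hc_def
  set b : ℝ := β / Real.log k with hb_def
  set C : ℝ := Real.logb k K with hC_def
  have hc : 0 < c := div_pos hα hlogk
  set s₀ : ℝ := Real.logb k d with hs_def
  set t₀ : ℝ := Real.logb k ((d:ℝ) + 1) with ht_def
  have hst : s₀ < t₀ := Real.logb_lt_logb hk1 hd0 (by linarith)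
  have hts : t₀ ≤ s₀ + 1 := by
    have hk2 : (2:ℝ) ≤ (k:ℝ) := by exact_mod_cast hk
    have hkd : (d:ℝ) + 1 ≤ (k:ℝ) * d := by nlinarith
    have h2 : t₀ ≤ Real.logb k ((k:ℝ) * d) := by
      rw [ht_def]
      exact Real.logb_le_logb_of_le hk1 (by linarith) hkd
    rw [Real.logb_mul (by linarith : (k:ℝ) ≠ 0) (ne_of_gt hd0),
      Real.logb_self_eq_one hk1] at h2
    rw [hs_def]
    linarith
  set εf : ℕ → ℝ := fun n =>
    Real.logb k (|(a n : ℝ)| / (K * (n:ℝ) ^ β * Real.exp (α * Real.sqrt n))) with hε_def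
  set g : ℕ → ℝ := fun n => c * Real.sqrt n + b * Real.log n + C with hg_def
  have habs1 : ∀ n, (1:ℝ) ≤ |(a n : ℝ)| := by
    intro n
    rw [← Int.cast_abs]
    exact_mod_cast Int.one_le_abs (ha n)
  have habs0 : ∀ n, (0:ℝ) < |(a n : ℝ)| := fun n => lt_of_lt_of_le one_pos (habs1 n)
  have hden : ∀ n : ℕ, 1 ≤ n → (0:ℝ) < K * (n:ℝ) ^ β * Real.exp (α * Real.sqrt n) := by
    intro n hn
    have hn0 : (0:ℝ) < n := by exact_mod_cast hn
    positivity
  have hdecomp : ∀ n : ℕ, 1 ≤ n → Real.logb k |(a n : ℝ)| = g n + εf n := by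
    intro n hn
    have hn0 : (0:ℝ) < n := by exact_mod_cast hn
    have h1 : εf n = Real.logb k |(a n : ℝ)| -
        Real.logb k (K * (n:ℝ) ^ β * Real.exp (α * Real.sqrt n)) := by
      simp only [hε_def]
      exact Real.logb_div (ne_of_gt (habs0 n)) (ne_of_gt (hden n hn))
    have h2 : Real.logb k (K * (n:ℝ) ^ β * Real.exp (α * Real.sqrt n)) = g n := by
      rw [Real.logb_mul (by positivity) (by positivity),
          Real.logb_mul (ne_of_gt hK) (by positivity)]
      have h3 : Real.logb k ((n:ℝ) ^ β) = b * Real.log n := by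
        rw [Real.logb, Real.log_rpow hn0, hb_def]
        ring
      have h4 : Real.logb k (Real.exp (α * Real.sqrt n)) = c * Real.sqrt n := by
        rw [Real.logb, Real.log_exp, hc_def]
        ring
      simp only [hg_def]
      rw [h3, h4, hC_def]
      ring
    linarith [h1, h2]
  have hεlim : Tendsto εf atTop (𝓝 0) := by
    have h1 : Tendsto (fun n : ℕ => Real.log
        (|(a n : ℝ)| / (K * (n:ℝ) ^ β * Real.exp (α * Real.sqrt n)))) atTop
        (𝓝 (Real.log 1)) :=
      ((Real.continuousAt_log one_ne_zero).tendsto).comp hasymp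
    rw [Real.log_one] at h1
    have h2 := h1.div_const (Real.log k)
    rw [zero_div] at h2
    refine h2.congr fun n => ?_
    simp only [hε_def]
    rw [Real.log_div_log]
  have hgtop : Tendsto g atTop atTop := core_g_tendsto c b C hc
  -- the logb product computations
  have hlogprod : ∀ m : ℕ, Real.logb k ((d:ℝ) * (k:ℝ) ^ m) = (m:ℝ) + s₀ := by
    intro m
    rw [Real.logb_mul (ne_of_gt hd0) (by positivity), Real.logb_pow,
      Real.logb_self_eq_one hk1, hs_def]
    ring
  have hlogprod1 : ∀ m : ℕ, Real.logb k (((d:ℝ) + 1) * (k:ℝ) ^ m) = (m:ℝ) + t₀ := by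
    intro m
    rw [Real.logb_mul (by linarith : (d:ℝ) + 1 ≠ 0) (by positivity), Real.logb_pow,
      Real.logb_self_eq_one hk1, ht_def]
    ring
  -- bounds on |a n| vs logb characterization
  have hBto : ∀ n : ℕ, 1 ≤ n → BeginsWith k d ((a n : ℝ)) →
      ∃ m : ℤ, (m:ℝ) + s₀ ≤ Real.logb k |(a n : ℝ)| ∧
        Real.logb k |(a n : ℝ)| < (m:ℝ) + t₀ := by
    intro n hn hB
    obtain ⟨m, h1, h2⟩ := hB
    refine ⟨(m : ℤ), ?_, ?_⟩
    · have := Real.logb_le_logb_of_le hk1 (by positivity) h1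
      rw [hlogprod m] at this
      push_cast
      exact this
    · have := Real.logb_lt_logb hk1 (habs0 n) h2
      rw [hlogprod1 m] at this
      push_cast
      exact this
  have htoB : ∀ n : ℕ, 1 ≤ n → ∀ m : ℤ, 0 ≤ m →
      (m:ℝ) + s₀ ≤ Real.logb k |(a n : ℝ)| →
      Real.logb k |(a n : ℝ)| < (m:ℝ) + t₀ → BeginsWith k d ((a n : ℝ)) := by
    intro n hn m hm0 h1 h2
    have hcast : ((m.toNat : ℕ) : ℝ) = (m : ℝ) := by
      exact_mod_cast Int.toNat_of_nonneg hm0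
    refine ⟨m.toNat, ?_, ?_⟩
    · have h3 : Real.logb k ((d:ℝ) * (k:ℝ) ^ m.toNat) ≤ Real.logb k |(a n : ℝ)| := by
        rw [hlogprod m.toNat, hcast]
        exact h1
      exact (Real.logb_le_logb hk1 (by positivity) (habs0 n)).1 h3
    · have h3 : Real.logb k |(a n : ℝ)| < Real.logb k (((d:ℝ) + 1) * (k:ℝ) ^ m.toNat) := by
        rw [hlogprod1 m.toNat, hcast]
        exact h2
      exact (Real.logb_lt_logb_iff hk1 (habs0 n) (by positivity)).1 h3
  -- target
  set F : ℕ → ℝ := fun N => (cnt (fun n => BeginsWith k d ((a n : ℝ))) N : ℝ) / N with hF_def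
  have hb_above : Filter.IsBoundedUnder (· ≤ ·) atTop F :=
    isBoundedUnder_of ⟨1, fun N => cnt_div_le_one _ N⟩
  have hb_below : Filter.IsBoundedUnder (· ≥ ·) atTop F :=
    isBoundedUnder_of ⟨0, fun N => cnt_div_nonneg _ N⟩
  -- upper bound on limsup
  have hall_sup : ∀ δ : ℝ, 0 < δ → δ < (t₀ - s₀) / 2 →
      Filter.limsup F atTop ≤ t₀ - s₀ + 2 * δ := by
    intro δ hδ hδ2
    have hev : ∀ᶠ n in atTop, |εf n| < δ := by
      have := Metric.tendsto_nhds.1 hεlim δ hδ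
      simpa [Real.dist_eq] using this
    have himpl : ∀ᶠ n in atTop, BeginsWith k d ((a n : ℝ)) →
        (∃ m : ℤ, (m:ℝ) + (s₀ - δ) ≤ g n ∧ g n < (m:ℝ) + (t₀ + δ)) := by
      filter_upwards [hev, eventually_ge_atTop 1] with n hn h1
      intro hB
      obtain ⟨m, hm1, hm2⟩ := hBto n h1 hB
      have hgx := hdecomp n h1
      rw [abs_lt] at hn
      exact ⟨m, by linarith, by linarith⟩
    obtain ⟨n₂, hn₂⟩ := eventually_atTop.1 himpl
    by_cases hcase : t₀ + δ ≤ (s₀ - δ) + 1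
    · have hcore : Tendsto (fun N => (cnt (fun n => ∃ m : ℤ,
          (m:ℝ) + (s₀ - δ) ≤ g n ∧ g n < (m:ℝ) + (t₀ + δ)) N : ℝ) / N) atTop
          (𝓝 ((t₀ + δ) - (s₀ - δ))) :=
        core c b C hc (s₀ - δ) (t₀ + δ) (by linarith) hcase
      have hz : Tendsto (fun N : ℕ => (n₂ : ℝ) / N) atTop (𝓝 0) :=
        Tendsto.div_atTop tendsto_const_nhds tendsto_natCast_atTop_atTop
      have hlim2 : Tendsto (fun N => (cnt (fun n => ∃ m : ℤ,
          (m:ℝ) + (s₀ - δ) ≤ g n ∧ g n < (m:ℝ) + (t₀ + δ)) N : ℝ) / N + (n₂ : ℝ) / N)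
          atTop (𝓝 (t₀ - s₀ + 2 * δ)) := by
        have h0 := hcore.add hz
        rw [add_zero] at h0
        have : (t₀ + δ) - (s₀ - δ) = t₀ - s₀ + 2 * δ := by ring
        rwa [this] at h0
      have hle : ∀ᶠ N in atTop, F N ≤ (cnt (fun n => ∃ m : ℤ,
          (m:ℝ) + (s₀ - δ) ≤ g n ∧ g n < (m:ℝ) + (t₀ + δ)) N : ℝ) / N + (n₂ : ℝ) / N := by
        filter_upwards [eventually_ge_atTop 1] with N hN
        have hNpos : (0:ℝ) < N := by exact_mod_cast hN
        have hcnt := cnt_le_cnt_add (fun n => BeginsWith k d ((a n : ℝ)))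
          (fun n => ∃ m : ℤ, (m:ℝ) + (s₀ - δ) ≤ g n ∧ g n < (m:ℝ) + (t₀ + δ)) n₂ hn₂ N
        simp only [hF_def]
        rw [← add_div, div_le_div_iff₀ hNpos hNpos]
        have : (cnt (fun n => BeginsWith k d ((a n : ℝ))) N : ℝ) ≤
            (cnt (fun n => ∃ m : ℤ, (m:ℝ) + (s₀ - δ) ≤ g n ∧ g n < (m:ℝ) + (t₀ + δ)) N : ℝ)
              + n₂ := by exact_mod_cast hcnt
        nlinarith
      calc Filter.limsup F atTop ≤ _ :=
            limsup_le_limsup hle hb_below.isCoboundedUnder_le hlim2.isBoundedUnder_le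
        _ = t₀ - s₀ + 2 * δ := hlim2.limsup_eq
    · push_neg at hcase
      have h1 : Filter.limsup F atTop ≤ 1 := by
        have hconst : Tendsto (fun _ : ℕ => (1:ℝ)) atTop (𝓝 1) := tendsto_const_nhds
        calc Filter.limsup F atTop ≤ Filter.limsup (fun _ : ℕ => (1:ℝ)) atTop :=
              limsup_le_limsup (Eventually.of_forall fun N => cnt_div_le_one _ N)
                hb_below.isCoboundedUnder_le hconst.isBoundedUnder_le
          _ = 1 := hconst.limsup_eq
      linarith
  -- lower bound on liminf
  have hall_inf : ∀ δ : ℝ, 0 < δ → δ < (t₀ - s₀) / 2 →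
      t₀ - s₀ - 2 * δ ≤ Filter.liminf F atTop := by
    intro δ hδ hδ2
    have hδ1 : δ < 1 := by nlinarith
    have hev : ∀ᶠ n in atTop, |εf n| < δ := by
      have := Metric.tendsto_nhds.1 hεlim δ hδ
      simpa [Real.dist_eq] using this
    have hgev : ∀ᶠ n in atTop, s₀ + 1 ≤ g n := hgtop.eventually_ge_atTop _
    have himpl : ∀ᶠ n in atTop, (∃ m : ℤ, (m:ℝ) + (s₀ + δ) ≤ g n ∧ g n < (m:ℝ) + (t₀ - δ)) →
        BeginsWith k d ((a n : ℝ)) := by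
      filter_upwards [hev, hgev, eventually_ge_atTop 1] with n hn hg1 h1
      rintro ⟨m, hm1, hm2⟩
      rw [abs_lt] at hn
      have hgx := hdecomp n h1
      have hlog1 : (m:ℝ) + s₀ ≤ Real.logb k |(a n : ℝ)| := by linarith
      have hlog2 : Real.logb k |(a n : ℝ)| < (m:ℝ) + t₀ := by linarith
      have hm0 : 0 ≤ m := by
        by_contra hcon
        push_neg at hcon
        have hmle : (m:ℝ) ≤ -1 := by
          have hm1 : m ≤ -1 := by omega
          exact_mod_cast hm1
        have : Real.logb k |(a n : ℝ)| < s₀ := by linarith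
        have : s₀ + 1 - δ ≤ Real.logb k |(a n : ℝ)| := by linarith
        linarith
      exact htoB n h1 m hm0 hlog1 hlog2
    obtain ⟨n₂, hn₂⟩ := eventually_atTop.1 himpl
    have hcore : Tendsto (fun N => (cnt (fun n => ∃ m : ℤ,
        (m:ℝ) + (s₀ + δ) ≤ g n ∧ g n < (m:ℝ) + (t₀ - δ)) N : ℝ) / N) atTop
        (𝓝 ((t₀ - δ) - (s₀ + δ))) :=
      core c b C hc (s₀ + δ) (t₀ - δ) (by linarith) (by linarith)
    have hz : Tendsto (fun N : ℕ => (n₂ : ℝ) / N) atTop (𝓝 0) :=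
      Tendsto.div_atTop tendsto_const_nhds tendsto_natCast_atTop_atTop
    have hlim2 : Tendsto (fun N => (cnt (fun n => ∃ m : ℤ,
        (m:ℝ) + (s₀ + δ) ≤ g n ∧ g n < (m:ℝ) + (t₀ - δ)) N : ℝ) / N - (n₂ : ℝ) / N)
        atTop (𝓝 (t₀ - s₀ - 2 * δ)) := by
      have h0 := hcore.sub hz
      rw [sub_zero] at h0
      have : (t₀ - δ) - (s₀ + δ) = t₀ - s₀ - 2 * δ := by ring
      rwa [this] at h0
    have hle : ∀ᶠ N in atTop, (cnt (fun n => ∃ m : ℤ,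
        (m:ℝ) + (s₀ + δ) ≤ g n ∧ g n < (m:ℝ) + (t₀ - δ)) N : ℝ) / N - (n₂ : ℝ) / N ≤ F N := by
      filter_upwards [eventually_ge_atTop 1] with N hN
      have hNpos : (0:ℝ) < N := by exact_mod_cast hN
      have hcnt := cnt_le_cnt_add
        (fun n => ∃ m : ℤ, (m:ℝ) + (s₀ + δ) ≤ g n ∧ g n < (m:ℝ) + (t₀ - δ))
        (fun n => BeginsWith k d ((a n : ℝ))) n₂ hn₂ N
      simp only [hF_def]
      rw [sub_le_iff_le_add, ← add_div, div_le_div_iff₀ hNpos hNpos]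
      have : (cnt (fun n => ∃ m : ℤ, (m:ℝ) + (s₀ + δ) ≤ g n ∧ g n < (m:ℝ) + (t₀ - δ)) N : ℝ) ≤
          (cnt (fun n => BeginsWith k d ((a n : ℝ))) N : ℝ) + n₂ := by exact_mod_cast hcnt
      nlinarith
    calc t₀ - s₀ - 2 * δ = _ := hlim2.liminf_eq.symm
      _ ≤ Filter.liminf F atTop :=
          liminf_le_liminf hle hlim2.isBoundedUnder_ge hb_above.isCoboundedUnder_ge
  -- combine
  have hsup : Filter.limsup F atTop ≤ t₀ - s₀ := by
    by_contra hcon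
    push_neg at hcon
    set L := Filter.limsup F atTop with hL_def
    have hδpos : 0 < min ((L - (t₀ - s₀)) / 4) ((t₀ - s₀) / 4) :=
      lt_min (by linarith) (by linarith)
    have h := hall_sup _ hδpos (lt_of_le_of_lt (min_le_right _ _) (by linarith))
    have h2 := min_le_left ((L - (t₀ - s₀)) / 4) ((t₀ - s₀) / 4)
    linarith
  have hinf : t₀ - s₀ ≤ Filter.liminf F atTop := by
    by_contra hcon
    push_neg at hcon
    set L := Filter.liminf F atTop with hL_def
    have hδpos : 0 < min (((t₀ - s₀) - L) / 4) ((t₀ - s₀) / 4) :=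
      lt_min (by linarith) (by linarith)
    have h := hall_inf _ hδpos (lt_of_le_of_lt (min_le_right _ _) (by linarith))
    have h2 := min_le_left (((t₀ - s₀) - L) / 4) ((t₀ - s₀) / 4)
    linarith
  have hgoal : Tendsto F atTop (𝓝 (t₀ - s₀)) :=
    tendsto_of_le_liminf_of_limsup_le hinf hsup hb_above hb_below
  exact hgoal
end
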